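/- arXiv:1210.6294 — 3 statements merged into one kernel-verified Lean document; each statement's English description precedes it below -/
import Mathlib

section
/- Let X:[0,T]→ℝ^d be continuously differentiable. Define 𝐗_{st} ∈ ℋ* for s,t ∈ [0,T] recursively by ⟨𝐗_{st},1⟩ = 1, ⟨𝐗_{st},•_i⟩ = X^i_t − X^i_s, ⟨𝐗_{st},[τ₁⋯τₙ]_i⟩ = ∫_s^t ⟨𝐗_{sr},τ₁⟩⋯⟨𝐗_{sr},τₙ⟩ dX^i_r (a Riemann–Stieltjes integral), extended multiplicatively to forests: ⟨𝐗_{st},τ₁⋯τₙ⟩ = ⟨𝐗_{st},τ₁⟩⋯⟨𝐗_{st},τₙ⟩. Then Chen's property holds: for all s,u,t ∈ [0,T] and every forest h, ⟨𝐗_{st},h⟩ = Σ_{(h)} ⟨𝐗_{su},h⁽¹⁾⟩⟨𝐗_{ut},h⁽²⁾⟩, where Δh = Σ_{(h)} h⁽¹⁾⊗h⁽²⁾. -/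
open scoped TensorProduct
open scoped Classical

noncomputable section

/-! ### Labelled rooted trees with unordered branches

`TreeData A` axiomatizes the set `𝒯` of nonempty rooted trees with finitely many
vertices, each vertex labelled from the alphabet `A`, with unordered branches:
`attach m a = [τ₁ ⋯ τₘ]_a` attaches the forest (multiset of trees) `m` to a new
root labelled `a`, and every tree arises uniquely in this way; `size τ = |τ|` is
the number of vertices.  These conditions pin the structure down uniquely. -/
structure TreeData (A : Type) : Type 1 where
  T : Type
  size : T → ℕ
  size_pos : ∀ τ, 0 < size τ
  attach : (T →₀ ℕ) → A → T
  attach_bijective : Function.Bijective fun p : (T →₀ ℕ) × A => attach p.1 p.2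
  size_attach : ∀ m a, size (attach m a) = 1 + m.sum fun τ k => k * size τ

namespace TreeData

variable {A : Type} (TD : TreeData A)

/-- the single-vertex tree `•_a` -/
def leaf (a : A) : TD.T := TD.attach 0 a

/-- The Connes–Kreimer Hopf algebra `ℋ`: the free commutative polynomial
`ℝ`-algebra on the trees, with linear basis the forests (monomials). -/
abbrev H : Type := MvPolynomial TD.T ℝ

/-- the grade `|τ₁ ⋯ τₙ| = |τ₁| + ⋯ + |τₙ|` of a forest -/
def grade (m : TD.T →₀ ℕ) : ℕ := m.sum fun τ k => k * TD.size τ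

/-- the basis monomial of `ℋ` corresponding to a forest -/
def mono (m : TD.T →₀ ℕ) : TD.H := MvPolynomial.monomial m (1 : ℝ)

/-- the grafting operator `B₊_a`, sending a forest `τ₁ ⋯ τₘ` to `[τ₁ ⋯ τₘ]_a` -/
def Bplus (a : A) : TD.H →ₗ[ℝ] TD.H :=
  (MvPolynomial.basisMonomials TD.T ℝ).constr ℝ fun m =>
    TD.mono (Finsupp.single (TD.attach m a) 1)

/-- `ℋ*`, the full linear dual of `ℋ`: formal series in the dual basis of forests -/
abbrev Dual : Type := (TD.T →₀ ℕ) → ℝ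

/-- the pairing `⟨f, h⟩` of `f ∈ ℋ*` with `h ∈ ℋ` -/
def pairL (f : TD.Dual) : TD.H →ₗ[ℝ] ℝ :=
  (MvPolynomial.basisMonomials TD.T ℝ).constr ℝ f

/-- the dual basis element of `ℋ*` corresponding to a forest -/
def dualForest (m : TD.T →₀ ℕ) : TD.Dual := fun m' => if m' = m then 1 else 0

/-- the counit `1* ∈ ℋ*` -/
def unitD : TD.Dual := fun m => if m = 0 then 1 else 0

/-- the subspace `ℋ_n ⊆ ℋ` spanned by the forests of grade at most `n` -/
def Hn (n : ℕ) : Submodule ℝ TD.H :=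
  Submodule.span ℝ {p : TD.H | ∃ m : TD.T →₀ ℕ, TD.grade m ≤ n ∧ p = TD.mono m}

/-- `g` is a character of `ℋ_N` (an element of the truncated group `G_N(ℋ)`):
`⟨g,1⟩ = 1` and `⟨g, h₁h₂⟩ = ⟨g,h₁⟩⟨g,h₂⟩` whenever `|h₁| + |h₂| ≤ N`. -/
def IsCharN (N : ℕ) (g : TD.Dual) : Prop :=
  g 0 = 1 ∧ (∀ m, ¬TD.grade m ≤ N → g m = 0) ∧
    ∀ m₁ m₂, TD.grade m₁ + TD.grade m₂ ≤ N → g (m₁ + m₂) = g m₁ * g m₂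

/-- `h ∈ ℋ*` is a `δ`-primitive: `δh = 1 ⊗ h + h ⊗ 1`, i.e.
`⟨h, xy⟩ = ⟨1, x⟩⟨h, y⟩ + ⟨h, x⟩⟨1, y⟩` for all `x, y ∈ ℋ`. -/
def IsPrim (f : TD.Dual) : Prop :=
  ∀ p q : TD.H, TD.pairL f (p * q) =
    TD.pairL TD.unitD p * TD.pairL f q + TD.pairL f p * TD.pairL TD.unitD q

/-- `g ∈ ℋ*` is group-like: `δg = g ⊗ g`, i.e. `⟨g, xy⟩ = ⟨g, x⟩⟨g, y⟩`. -/
def IsGroupLike (g : TD.Dual) : Prop :=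
  ∀ p q : TD.H, TD.pairL g (p * q) = TD.pairL g p * TD.pairL g q

/-- the linear tree with root labelled `a` and the labels of `l` going up the chain -/
def chainUp : A → List A → TD.T
  | a, [] => TD.leaf a
  | a, b :: l => TD.attach (Finsupp.single (chainUp b l) 1) a

/-- the inclusion `ι : T(ℝᵈ) → ℋ` on basis words: the word `i₁ ⋯ i_k` is sent to the
(forest consisting of the) linear tree with `i₁` at the top down to `i_k` at the root -/
def iotaForest (w : List A) : TD.T →₀ ℕ :=
  match w.reverse with
  | [] => 0
  | a :: l => Finsupp.single (TD.chainUp a l) 1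

/-- `F` is the family of elementary differentials (Butcher coefficients) `f_τ`
associated to the vector fields `f_a`: `f_{[τ₁⋯τₙ]_a} = Dⁿf_a : (f_{τ₁},…,f_{τₙ})`. -/
def IsElemDiff (e : ℕ) (f : A → (Fin e → ℝ) → Fin e → ℝ)
    (F : TD.T → (Fin e → ℝ) → Fin e → ℝ) : Prop :=
  ∀ (m : TD.T →₀ ℕ) (a : A) (y : Fin e → ℝ) (α : Fin e),
    F (TD.attach m a) y α =
      iteratedFDeriv ℝ m.toMultiset.toList.length (fun x => f a x α) y
        (fun j => F (m.toMultiset.toList.get j) y)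

/-- `f_h` on the forest basis: `f_1 = Id`, `f_τ = F τ` on trees, and `f` vanishes on
nontrivial forest products. -/
def forestElem {e : ℕ} (F : TD.T → (Fin e → ℝ) → Fin e → ℝ)
    (m : TD.T →₀ ℕ) (y : Fin e → ℝ) (α : Fin e) : ℝ :=
  if m = 0 then y α
  else if h : ∃ τ : TD.T, m = Finsupp.single τ 1 then F h.choose y α else 0

end TreeData

/-- The Connes–Kreimer coproduct: the algebra morphism `Δ : ℋ → ℋ ⊗ ℋ` determined
recursively by `Δ1 = 1 ⊗ 1` and
`Δ[τ₁⋯τₘ]_a = [τ₁⋯τₘ]_a ⊗ 1 + Σ (τ₁⁽¹⁾⋯τₘ⁽¹⁾) ⊗ [τ₁⁽²⁾⋯τₘ⁽²⁾]_a`,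
i.e. by the cocycle property `Δ ∘ B₊_a = B₊_a ⊗ 1 + (id ⊗ B₊_a) ∘ Δ`. -/
structure CKCoproduct {A : Type} (TD : TreeData A) where
  Δ : TD.H →ₐ[ℝ] TD.H ⊗[ℝ] TD.H
  Δ_Bplus : ∀ (a : A) (p : TD.H),
    Δ (TD.Bplus a p) = TD.Bplus a p ⊗ₜ[ℝ] 1 + LinearMap.lTensor TD.H (TD.Bplus a) (Δ p)

namespace CKCoproduct

variable {A : Type} {TD : TreeData A} (CK : CKCoproduct TD)

/-- the convolution product on `ℋ*`: `⟨f ⋆ g, h⟩ = ⟨f ⊗ g, Δh⟩` -/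
def conv (f g : TD.Dual) : TD.Dual := fun m =>
  LinearMap.mul' ℝ ℝ (TensorProduct.map (TD.pairL f) (TD.pairL g) (CK.Δ (TD.mono m)))

/-- the convolution product, truncated beyond grade `N` -/
def convN (N : ℕ) (f g : TD.Dual) : TD.Dual := fun m =>
  if TD.grade m ≤ N then CK.conv f g m else 0

/-- truncated convolution powers -/
def convNPow (N : ℕ) (f : TD.Dual) (k : ℕ) : TD.Dual :=
  Nat.rec TD.unitD (fun _ ih => CK.convN N f ih) k

/-- the `⋆`-inverse in the truncated character group `G_N(ℋ)` -/
def starInv (N : ℕ) (g : TD.Dual) : TD.Dual := fun m =>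
  ∑ k ∈ Finset.range (N + 1), (-1 : ℝ) ^ k * CK.convNPow N (g - TD.unitD) k m

/-- the truncated `⋆`-logarithm `log⋆(1+x) = Σ_{k≥1} (−1)^{k−1} x^{⋆k}/k` -/
def logStar (N : ℕ) (g : TD.Dual) : TD.Dual := fun m =>
  ∑ k ∈ Finset.Icc 1 N, ((-1 : ℝ) ^ (k + 1) / k) * CK.convNPow N (g - TD.unitD) k m

/-- untruncated convolution powers -/
def convPow (f : TD.Dual) (k : ℕ) : TD.Dual :=
  Nat.rec TD.unitD (fun _ ih => CK.conv f ih) k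

/-- the `⋆`-exponential `exp⋆(h) = Σ_{k≥0} h^{⋆k}/k!` -/
def expStar (f : TD.Dual) : TD.Dual := fun m => ∑' k : ℕ, (Nat.factorial k : ℝ)⁻¹ * CK.convPow f k m

/-- the increments `𝐗_{st} = 𝐗_s⁻¹ ⋆ 𝐗_t` of a path in `G_N(ℋ)` -/
def inc (N : ℕ) (X : ℝ → TD.Dual) (s t : ℝ) : TD.Dual :=
  CK.convN N (CK.starInv N (X s)) (X t)

/-- a `γ`-Hölder branched rough path on `[0,T]`: a path in `G_N(ℋ)` with
`sup_{s≠t} |⟨𝐗_{st},τ⟩|/|t−s|^{γ|τ|} < ∞` for every forest `τ` of grade `≤ N`. -/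
def IsBRP (γ : ℝ) (N : ℕ) (Tf : ℝ) (X : ℝ → TD.Dual) : Prop :=
  (∀ t ∈ Set.Icc (0 : ℝ) Tf, TD.IsCharN N (X t)) ∧
    ∀ m : TD.T →₀ ℕ, TD.grade m ≤ N →
      ∃ C : ℝ, ∀ s ∈ Set.Icc (0 : ℝ) Tf, ∀ t ∈ Set.Icc (0 : ℝ) Tf,
        |CK.inc N X s t m| ≤ C * |t - s| ^ (γ * (TD.grade m : ℝ))

end CKCoproduct

/-! ### Words: the tensor algebra over a set of letters, with shuffle and
(de)concatenation structure.  An element of `T(V)` (or a functional on it) is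
represented by its family of coefficients on basis words. -/
namespace Words

variable {ι : Type}

/-- the empty word `1` (as a dual/coefficient family) -/
def unitW : List ι → ℝ := fun w => if w = [] then 1 else 0

/-- the basis element corresponding to a single word -/
def deltaW (w : List ι) : List ι → ℝ := fun w' => if w' = w then 1 else 0

/-- the multiset of shuffles (interleavings) of two words -/
def Shuf : List ι → List ι → Multiset (List ι)
  | [], l => {l}
  | a :: as, [] => {a :: as}
  | a :: as, b :: bs =>
      ((Shuf as (b :: bs)).map fun w => a :: w) + ((Shuf (a :: as) bs).map fun w => b :: w)
  termination_by l₁ l₂ => l₁.length + l₂.length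

/-- the subword of `w` along a set of positions -/
def subIdx (w : List ι) (S : Finset (Fin w.length)) : List ι :=
  (S.sort (· ≤ ·)).map w.get

/-- the shuffle product `⧢` (in coefficients) -/
def shufW (x y : List ι → ℝ) : List ι → ℝ := fun w =>
  ∑ S : Finset (Fin w.length), x (subIdx w S) * y (subIdx w Sᶜ)

/-- the concatenation (tensor) product of functionals, truncated beyond `N` letters -/
def concatConvN (N : ℕ) (f g : List ι → ℝ) : List ι → ℝ := fun w =>
  if w.length ≤ N then ∑ k ∈ Finset.range (w.length + 1), f (w.take k) * g (w.drop k) else 0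

/-- truncated concatenation powers -/
def concatPow (N : ℕ) (f : List ι → ℝ) (k : ℕ) : List ι → ℝ :=
  Nat.rec unitW (fun _ ih => concatConvN N f ih) k

/-- the inverse in the truncated group: `g⁻¹ = Σ_k (−1)^k (g − 1)^{⊗k}` -/
def concatInv (N : ℕ) (g : List ι → ℝ) : List ι → ℝ := fun w =>
  ∑ k ∈ Finset.range (N + 1), (-1 : ℝ) ^ k * concatPow N (g - unitW) k w

/-- the truncated tensor exponential -/
def expW (N : ℕ) (x : List ι → ℝ) : List ι → ℝ := fun w =>
  ∑ k ∈ Finset.range (N + 1), (Nat.factorial k : ℝ)⁻¹ * concatPow N x k w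

/-- the truncated tensor logarithm -/
def logW (N : ℕ) (x : List ι → ℝ) : List ι → ℝ := fun w =>
  ∑ k ∈ Finset.Icc 1 N, ((-1 : ℝ) ^ (k + 1) / k) * concatPow N (x - unitW) k w

/-- a shuffle character truncated at `N` letters, with letters restricted by `P`:
an element of the step-`N` free nilpotent group `G^{(N)}` over the letters. -/
def IsShuffleCharN (N : ℕ) (P : ι → Prop) (g : List ι → ℝ) : Prop :=
  g [] = 1 ∧ (∀ w : List ι, ¬(w.length ≤ N ∧ ∀ σ ∈ w, P σ) → g w = 0) ∧
    ∀ u v : List ι, u.length + v.length ≤ N → ((Shuf u v).map g).sum = g u * g v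

/-- the increments `𝐗̄_{st} = 𝐗̄_s⁻¹ ⊗ 𝐗̄_t` of a path in `G^{(N)}` -/
def gInc (N : ℕ) (X : ℝ → List ι → ℝ) (s t : ℝ) : List ι → ℝ :=
  concatConvN N (concatInv N (X s)) (X t)

/-- a `γ`-Hölder geometric rough path on `[0,T]`: a path in the step-`N` free
nilpotent group with `|⟨𝐗̄_{st}, w⟩| ≤ C|t−s|^{γk}` for words of `k ≤ N` letters. -/
def IsGeomRP (γ : ℝ) (N : ℕ) (Tf : ℝ) (P : ι → Prop) (X : ℝ → List ι → ℝ) : Prop :=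
  (∀ t ∈ Set.Icc (0 : ℝ) Tf, IsShuffleCharN N P (X t)) ∧
    ∀ w : List ι, w.length ≤ N →
      ∃ C : ℝ, ∀ s ∈ Set.Icc (0 : ℝ) Tf, ∀ t ∈ Set.Icc (0 : ℝ) Tf,
        |gInc N X s t w| ≤ C * |t - s| ^ (γ * (w.length : ℝ))

/-- the projection of `T(ℬ)` onto `T(ℬ_n)` (kill words with a letter of size `> n`) -/
def projW {A : Type} (TD : TreeData A) (n : ℕ) (x : List TD.T → ℝ) : List TD.T → ℝ :=
  fun w => if ∀ σ ∈ w, TD.size σ ≤ n then x w else 0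

/-- the weight of a word of trees -/
def wt {A : Type} (TD : TreeData A) (w : List TD.T) : ℕ := (w.map TD.size).sum

/-- the commutator bracket with respect to truncated concatenation -/
def bracketW (N : ℕ) (x y : List ι → ℝ) : List ι → ℝ :=
  concatConvN N x y - concatConvN N y x

/-- the free (step-`N`) Lie algebra generated by the letters satisfying `P` -/
def freeLie (N : ℕ) (P : ι → Prop) : Submodule ℝ (List ι → ℝ) :=
  sInf {S : Submodule ℝ (List ι → ℝ) |
    (∀ a : ι, P a → deltaW [a] ∈ S) ∧ ∀ x ∈ S, ∀ y ∈ S, bracketW N x y ∈ S}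

/-- the Lie ideal of the free Lie algebra generated by a set `G` -/
def lieIdealGen (N : ℕ) (P : ι → Prop) (G : Set (List ι → ℝ)) : Submodule ℝ (List ι → ℝ) :=
  sInf {S : Submodule ℝ (List ι → ℝ) |
    G ⊆ ↑S ∧ ∀ x ∈ freeLie N P, ∀ y ∈ S, bracketW N x y ∈ S}

/-- the homogeneous norm `ρ(x) = Σ_k ‖ℓ_k‖^{1/k}` where `log x = Σ ℓ_k` is graded by
the number of tensor factors and `‖·‖` is the Euclidean norm -/
def rhoNorm (N : ℕ) (x : List ι → ℝ) : ℝ :=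
  ∑ k ∈ Finset.Icc 1 N,
    Real.sqrt (∑' w : {w : List ι // w.length = k}, logW N x w.1 ^ 2) ^ ((k : ℝ)⁻¹)

end Words

namespace TreeData

variable {A : Type} (TD : TreeData A)

/-- `φ` is the Hopf algebra morphism `φ_g : ℋ → T(ℝᵈ)` determined by `φ_g(1) = 1`,
`φ_g([h]_a) = φ_g(h) ⊗ e_a` and `φ_g(h₁h₂) = φ_g(h₁) ⧢ φ_g(h₂)`. -/
def IsPhiG (φ : TD.H →ₗ[ℝ] (List A → ℝ)) : Prop :=
  φ (1 : TD.H) = Words.unitW ∧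
  (∀ p : TD.H, (Function.support (φ p)).Finite) ∧
  (∀ (a : A) (p : TD.H),
      φ (TD.Bplus a p) = fun w => if w.getLast? = some a then φ p w.dropLast else 0) ∧
  (∀ p q : TD.H, φ (p * q) = Words.shufW (φ p) (φ q))

/-- the coefficient `⟨h, φ(𝐙)_s⟩` of the composition of a smooth function with a
controlled rough path, for a nonempty forest `h`:
`Σ_{h₁⋯hₙ = h} (1/n!) Dⁿφ(Z_s) : (⟨h₁,𝐙_s⟩, …, ⟨hₙ,𝐙_s⟩)`. -/
def compC {e : ℕ} (φ : (Fin e → ℝ) → Fin e → ℝ) (Zs : Fin e → TD.H)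
    (h : TD.T →₀ ℕ) (α : Fin e) : ℝ :=
  ∑' p : Σ n : ℕ, Fin n → (TD.T →₀ ℕ),
    if (∀ j, p.2 j ≠ 0) ∧ (∑ j, p.2 j) = h ∧ 0 < p.1 then
      (Nat.factorial p.1 : ℝ)⁻¹ *
        iteratedFDeriv ℝ p.1 (fun x => φ x α) (fun β => MvPolynomial.coeff 0 (Zs β))
          (fun j β => MvPolynomial.coeff (p.2 j) (Zs β))
    else 0

/-- the full composition coefficient, `⟨1, φ(𝐙)_s⟩ = φ(Z_s)` on the empty forest -/
def compFull {e : ℕ} (φ : (Fin e → ℝ) → Fin e → ℝ) (Zs : Fin e → TD.H)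
    (h : TD.T →₀ ℕ) (α : Fin e) : ℝ :=
  if h = 0 then φ (fun β => MvPolynomial.coeff 0 (Zs β)) α else TD.compC φ Zs h α

end TreeData

namespace CKCoproduct

variable {A : Type} {TD : TreeData A} (CK : CKCoproduct TD)

/-- `ψ : (ℋ,·,Δ) → (T(ℬ),⧢,Δ̄)` is a graded morphism of Hopf algebras such that for
every tree `τ` with `|τ| ≤ n`, `ψ(τ) = τ + ψ_{n−1}(τ)` (where `ψ_{n−1}` is `ψ`
composed with the projection onto `T(ℬ_{n−1})`). -/
def IsPsi (ψ : TD.H →ₗ[ℝ] (List TD.T → ℝ)) : Prop :=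
  ψ (1 : TD.H) = Words.unitW ∧
  (∀ p : TD.H, (Function.support (ψ p)).Finite) ∧
  (∀ (m : TD.T →₀ ℕ) (w : List TD.T), Words.wt TD w ≠ TD.grade m → ψ (TD.mono m) w = 0) ∧
  (∀ p q : TD.H, ψ (p * q) = Words.shufW (ψ p) (ψ q)) ∧
  (∀ (p : TD.H) (u v : List TD.T),
      ψ p (u ++ v) =
        LinearMap.mul' ℝ ℝ
          (TensorProduct.map
            ((LinearMap.proj (R := ℝ) (φ := fun _ : List TD.T => ℝ) u).comp ψ)
            ((LinearMap.proj (R := ℝ) (φ := fun _ : List TD.T => ℝ) v).comp ψ)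
            (CK.Δ p))) ∧
  (∀ (n : ℕ) (τ : TD.T), TD.size τ ≤ n →
      ∀ w : List TD.T, (∃ σ ∈ w, n ≤ TD.size σ) →
        ψ (TD.mono (Finsupp.single τ 1)) w = if w = [τ] then 1 else 0)

/-- an `𝐗`-controlled rough path with coefficients indexed by forests of grade `≤ M`:
`|⟨h,𝐙_t⟩ − ⟨𝐗_{st} ⋆ h, 𝐙_s⟩| ≤ C |t−s|^{(N−|h|)γ}`. -/
def IsControlled (γ : ℝ) (N M : ℕ) (Tf : ℝ) {e : ℕ}
    (Xinc : ℝ → ℝ → TD.Dual) (Z : ℝ → Fin e → TD.H) : Prop :=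
  (∀ t ∈ Set.Icc (0 : ℝ) Tf, ∀ α, ∀ m : TD.T →₀ ℕ, ¬TD.grade m ≤ M →
      MvPolynomial.coeff m (Z t α) = 0) ∧
    ∀ m : TD.T →₀ ℕ, TD.grade m ≤ M →
      ∃ C : ℝ, ∀ s ∈ Set.Icc (0 : ℝ) Tf, ∀ t ∈ Set.Icc (0 : ℝ) Tf, ∀ α,
        |MvPolynomial.coeff m (Z t α) -
            TD.pairL (CK.conv (Xinc s t) (TD.dualForest m)) (Z s α)| ≤
          C * |t - s| ^ (γ * ((N : ℝ) - (TD.grade m : ℝ)))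

/-- `Y` (together with the controlled rough path `𝐘 = Z` above it) solves the RDE
`dY_t = Σ_a f_a(Y_t) dX^a_t` driven by the rough path with increments `Xinc`, in the
sense of the controlled-rough-path fixed point `𝐘_t − 𝐘_s = ∫_s^t f(𝐘_r)·dX_r`,
the rough integral being defined via the sewing lemma from the local approximations
`Σ_{a} Σ_{h} ⟨h, f_a(𝐘)_s⟩ ⟨𝐗_{st}, [h]_a⟩`. -/
def IsRDESolution (γ : ℝ) (N M : ℕ) (Tf : ℝ) {e : ℕ}
    (Xinc : ℝ → ℝ → TD.Dual) (f : A → (Fin e → ℝ) → Fin e → ℝ)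
    (Y : ℝ → Fin e → ℝ) (Z : ℝ → Fin e → TD.H) : Prop :=
  CK.IsControlled γ N M Tf Xinc Z ∧
  (∀ t ∈ Set.Icc (0 : ℝ) Tf, ∀ α, MvPolynomial.coeff 0 (Z t α) = Y t α) ∧
  (∀ t ∈ Set.Icc (0 : ℝ) Tf, ∀ α, ∀ (h : TD.T →₀ ℕ) (a : A),
      TD.grade (Finsupp.single (TD.attach h a) 1) ≤ M →
      MvPolynomial.coeff (Finsupp.single (TD.attach h a) 1) (Z t α) =
        TD.compFull (f a) (Z t) h α) ∧
  (∀ t ∈ Set.Icc (0 : ℝ) Tf, ∀ α, ∀ m : TD.T →₀ ℕ, m ≠ 0 →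
      (¬∃ τ : TD.T, m = Finsupp.single τ 1) → MvPolynomial.coeff m (Z t α) = 0) ∧
  ∃ r : ℝ → ℝ → Fin e → ℝ,
    (∀ s ∈ Set.Icc (0 : ℝ) Tf, ∀ t ∈ Set.Icc (0 : ℝ) Tf, ∀ α,
      Y t α - Y s α =
        (∑' p : (TD.T →₀ ℕ) × A,
          if TD.grade p.1 ≤ N - 1 then
            TD.compFull (f p.2) (Z s) p.1 α *
              Xinc s t (Finsupp.single (TD.attach p.1 p.2) 1)
          else 0) + r s t α) ∧
    ∀ ε > (0 : ℝ), ∃ δ > (0 : ℝ), ∀ s ∈ Set.Icc (0 : ℝ) Tf, ∀ t ∈ Set.Icc (0 : ℝ) Tf,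
      |t - s| ≤ δ → ∀ α, |r s t α| ≤ ε * |t - s|

/-- the homogeneous norm `∥g∥ = Σ_{τ ∈ 𝒯_N} |⟨log⋆ g, τ⟩|^{1/|τ|}` on `G_N(ℋ)` -/
def hNorm (N : ℕ) (g : TD.Dual) : ℝ :=
  ∑' τ : TD.T,
    if TD.size τ ≤ N then |CK.logStar N g (Finsupp.single τ 1)| ^ ((TD.size τ : ℝ)⁻¹) else 0

end CKCoproduct

section ChenAux

variable {A : Type} {TD : TreeData A}

lemma mono_basis (m : TD.T →₀ ℕ) :
    (MvPolynomial.basisMonomials TD.T ℝ) m = TD.mono m := by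
  rw [TreeData.mono]
  exact congrFun (MvPolynomial.coe_basisMonomials TD.T ℝ) m

lemma pairL_mono (f : TD.Dual) (m : TD.T →₀ ℕ) : TD.pairL f (TD.mono m) = f m := by
  rw [TreeData.pairL, ← mono_basis, Module.Basis.constr_basis]

lemma Bplus_mono (a : A) (m : TD.T →₀ ℕ) :
    TD.Bplus a (TD.mono m) = TD.mono (Finsupp.single (TD.attach m a) 1) := by
  rw [TreeData.Bplus, ← mono_basis, Module.Basis.constr_basis]

lemma mono_zero : TD.mono 0 = (1 : TD.H) := by
  simp [TreeData.mono]

lemma mono_add (m₁ m₂ : TD.T →₀ ℕ) : TD.mono (m₁ + m₂) = TD.mono m₁ * TD.mono m₂ := by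
  simp [TreeData.mono, MvPolynomial.monomial_mul]

lemma pairL_one (f : TD.Dual) : TD.pairL f (1 : TD.H) = f 0 := by
  rw [← mono_zero, pairL_mono]

lemma char_single_pow {f : TD.Dual} (h0 : f 0 = 1)
    (hm : ∀ a b, f (a + b) = f a * f b) (τ : TD.T) :
    ∀ k : ℕ, f (Finsupp.single τ k) = f (Finsupp.single τ 1) ^ k := by
  intro k; induction k with
  | zero => simp [h0]
  | succ k ih => rw [pow_succ, ← ih, ← hm, ← Finsupp.single_add]

lemma char_prod {f : TD.Dual} (h0 : f 0 = 1)
    (hm : ∀ a b, f (a + b) = f a * f b) (m : TD.T →₀ ℕ) :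
    f m = m.prod fun τ k => f (Finsupp.single τ 1) ^ k := by
  induction m using Finsupp.induction with
  | zero => simp [h0]
  | single_add τ k m hτm hk ih =>
    rw [hm, ih, Finsupp.prod_add_index' (fun a => pow_zero _) (fun a b₁ b₂ => pow_add _ _ _)]
    congr 1
    exact (char_single_pow h0 hm τ k).trans (Finsupp.prod_single_index (h := fun a b => f (Finsupp.single a 1) ^ b) (pow_zero _)).symm

lemma pairL_char {f : TD.Dual} (h0 : f 0 = 1)
    (hm : ∀ a b, f (a + b) = f a * f b) :
    TD.pairL f =
      (MvPolynomial.aeval (R := ℝ) fun τ => f (Finsupp.single τ 1)).toLinearMap := by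
  apply (MvPolynomial.basisMonomials TD.T ℝ).ext
  intro m
  rw [mono_basis, pairL_mono, AlgHom.toLinearMap_apply, TreeData.mono,
    MvPolynomial.aeval_monomial, map_one, one_mul, char_prod h0 hm]

lemma mul'_map (φ ψ : TD.H →ₐ[ℝ] ℝ) (z : TD.H ⊗[ℝ] TD.H) :
    LinearMap.mul' ℝ ℝ (TensorProduct.map φ.toLinearMap ψ.toLinearMap z) =
      Algebra.TensorProduct.productMap φ ψ z := by
  induction z using TensorProduct.induction_on with
  | zero => simp
  | tmul a b => simp [LinearMap.mul'_apply, Algebra.TensorProduct.productMap_apply_tmul]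
  | add x y hx hy => rw [map_add, map_add, map_add, hx, hy]

lemma conv_def {CK : CKCoproduct TD} (f g : TD.Dual) (m : TD.T →₀ ℕ) :
    CK.conv f g m =
      LinearMap.mul' ℝ ℝ (TensorProduct.map (TD.pairL f) (TD.pairL g) (CK.Δ (TD.mono m))) :=
  rfl

lemma conv_zero {CK : CKCoproduct TD} {f g : TD.Dual} (hf : f 0 = 1) (hg : g 0 = 1) :
    CK.conv f g 0 = 1 := by
  rw [conv_def, mono_zero, map_one, Algebra.TensorProduct.one_def,
    TensorProduct.map_tmul, LinearMap.mul'_apply, pairL_one, pairL_one, hf, hg, mul_one]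

lemma conv_add {CK : CKCoproduct TD} {f g : TD.Dual}
    (hf0 : f 0 = 1) (hfm : ∀ a b, f (a + b) = f a * f b)
    (hg0 : g 0 = 1) (hgm : ∀ a b, g (a + b) = g a * g b) (m₁ m₂ : TD.T →₀ ℕ) :
    CK.conv f g (m₁ + m₂) = CK.conv f g m₁ * CK.conv f g m₂ := by
  simp only [conv_def, pairL_char hf0 hfm, pairL_char hg0 hgm, mul'_map]
  rw [mono_add, map_mul, map_mul]

lemma Esum (f g : TD.Dual) (x : TD.H ⊗[ℝ] TD.H) :
    LinearMap.mul' ℝ ℝ (TensorProduct.map (TD.pairL f) (TD.pairL g) x) =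
      (((MvPolynomial.basisMonomials TD.T ℝ).tensorProduct
          (MvPolynomial.basisMonomials TD.T ℝ)).repr x).sum
        (fun p c => c * (f p.1 * g p.2)) := by
  set B := (MvPolynomial.basisMonomials TD.T ℝ).tensorProduct
    (MvPolynomial.basisMonomials TD.T ℝ) with hB
  conv_lhs => rw [← B.linearCombination_repr x]
  rw [Finsupp.linearCombination_apply, map_finsuppSum, map_finsuppSum]
  refine Finsupp.sum_congr fun p hp => ?_
  rw [map_smul, map_smul, smul_eq_mul]
  congr 1
  rw [hB, Module.Basis.tensorProduct_apply', mono_basis, mono_basis,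
    TensorProduct.map_tmul, LinearMap.mul'_apply, pairL_mono, pairL_mono]

lemma Esum_lTensor (f g : TD.Dual) (i : A) (x : TD.H ⊗[ℝ] TD.H) :
    LinearMap.mul' ℝ ℝ (TensorProduct.map (TD.pairL f) (TD.pairL g)
        (LinearMap.lTensor TD.H (TD.Bplus i) x)) =
      (((MvPolynomial.basisMonomials TD.T ℝ).tensorProduct
          (MvPolynomial.basisMonomials TD.T ℝ)).repr x).sum
        (fun p c => c * (f p.1 * g (Finsupp.single (TD.attach p.2 i) 1))) := by
  set B := (MvPolynomial.basisMonomials TD.T ℝ).tensorProduct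
    (MvPolynomial.basisMonomials TD.T ℝ) with hB
  conv_lhs => rw [← B.linearCombination_repr x]
  rw [Finsupp.linearCombination_apply, map_finsuppSum, map_finsuppSum, map_finsuppSum]
  refine Finsupp.sum_congr fun p hp => ?_
  rw [map_smul, map_smul, map_smul, smul_eq_mul]
  congr 1
  rw [hB, Module.Basis.tensorProduct_apply', mono_basis, mono_basis,
    LinearMap.lTensor_tmul, Bplus_mono, TensorProduct.map_tmul,
    LinearMap.mul'_apply, pairL_mono, pairL_mono]

lemma grade_add (m₁ m₂ : TD.T →₀ ℕ) :
    TD.grade (m₁ + m₂) = TD.grade m₁ + TD.grade m₂ :=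
  Finsupp.sum_add_index' (fun τ => zero_mul _) (fun τ k l => add_mul k l _)

lemma grade_single (τ : TD.T) (k : ℕ) :
    TD.grade (Finsupp.single τ k) = k * TD.size τ :=
  Finsupp.sum_single_index (zero_mul _)

lemma grade_pos {m : TD.T →₀ ℕ} (hm : m ≠ 0) : 0 < TD.grade m := by
  obtain ⟨τ, hτ⟩ := Finsupp.support_nonempty_iff.mpr hm
  have h1 : 1 ≤ m τ := Nat.one_le_iff_ne_zero.mpr (Finsupp.mem_support_iff.mp hτ)
  have : m τ * TD.size τ ≤ TD.grade m :=
    Finset.single_le_sum (f := fun τ => m τ * TD.size τ) (fun _ _ => Nat.zero_le _) hτ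
  have h2 : 0 < m τ * TD.size τ := Nat.mul_pos h1 (TD.size_pos τ)
  omega

lemma forest_decomp {m : TD.T →₀ ℕ} (hm : m ≠ 0) :
    ∃ τ : TD.T, m = Finsupp.single τ 1 + (m - Finsupp.single τ 1) := by
  obtain ⟨τ, hτ⟩ := Finsupp.support_nonempty_iff.mpr hm
  refine ⟨τ, ?_⟩
  rw [add_tsub_cancel_of_le (Finsupp.single_le_iff.mpr
    (Nat.one_le_iff_ne_zero.mpr (Finsupp.mem_support_iff.mp hτ)))]

end ChenAux

/-! ### STATEMENT 3
If `X : [0,T] → ℝᵈ` is continuously differentiable and `𝐗_{st}` is defined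
recursively by `⟨𝐗_{st},1⟩ = 1`, `⟨𝐗_{st},[τ₁⋯τₙ]_i⟩ = ∫_s^t ⟨𝐗_{sr},τ₁⟩⋯⟨𝐗_{sr},τₙ⟩ dX^i_r`
(Riemann–Stieltjes) and multiplicativity on forests, then Chen's property holds:
`⟨𝐗_{st},h⟩ = Σ_{(h)} ⟨𝐗_{su},h⁽¹⁾⟩⟨𝐗_{ut},h⁽²⁾⟩` for all `s,u,t ∈ [0,T]`. -/
theorem stmt_3 {d : ℕ} (hd : 1 ≤ d) (TD : TreeData (Fin d)) (CK : CKCoproduct TD)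
    (T : ℝ) (hT : 0 < T) (X : ℝ → Fin d → ℝ) (hX : ContDiff ℝ 1 X)
    (BX : ℝ → ℝ → TD.Dual)
    (hone : ∀ s t : ℝ, BX s t 0 = 1)
    (hmul : ∀ (s t : ℝ) (m₁ m₂ : TD.T →₀ ℕ), BX s t (m₁ + m₂) = BX s t m₁ * BX s t m₂)
    (hint : ∀ (s t : ℝ) (m : TD.T →₀ ℕ) (i : Fin d),
      BX s t (Finsupp.single (TD.attach m i) 1) =
        ∫ r in s..t, BX s r m * deriv (fun u => X u i) r) :
    ∀ s ∈ Set.Icc (0 : ℝ) T, ∀ u ∈ Set.Icc (0 : ℝ) T, ∀ t ∈ Set.Icc (0 : ℝ) T,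
      ∀ m : TD.T →₀ ℕ, BX s t m = CK.conv (BX s u) (BX u t) m := by
  have hderiv : ∀ i : Fin d, Continuous (deriv fun r => X r i) :=
    fun i => (contDiff_pi.mp hX i).continuous_deriv le_rfl
  have hcontAll : ∀ (m : TD.T →₀ ℕ) (v : ℝ), Continuous fun r => BX v r m := by
    suffices h : ∀ (n : ℕ) (m : TD.T →₀ ℕ), TD.grade m ≤ n → ∀ v : ℝ,
        Continuous fun r => BX v r m from fun m v => h (TD.grade m) m le_rfl v
    intro n
    induction n with
    | zero =>
      intro m hm v
      have hm0 : m = 0 := by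
        by_contra h
        have := grade_pos h
        omega
      subst hm0
      simp only [hone]
      exact continuous_const
    | succ n IH =>
      intro m hm v
      rcases eq_or_ne m 0 with rfl | hm0
      · simp only [hone]; exact continuous_const
      obtain ⟨τ, hdecomp⟩ := forest_decomp hm0
      set m' := m - Finsupp.single τ 1 with hm'
      rcases eq_or_ne m' 0 with hz | hnz
      · rw [hz, add_zero] at hdecomp
        subst hdecomp
        obtain ⟨⟨m'', i⟩, hτ0⟩ := TD.attach_bijective.2 τ
        have hτ : TD.attach m'' i = τ := hτ0
        subst hτ
        have hg : TD.grade m'' ≤ n := by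
          rw [grade_single, TD.size_attach, one_mul] at hm
          have h2 : (m''.sum fun σ k => k * TD.size σ) = TD.grade m'' := rfl
          omega
        have heq : (fun r => BX v r (Finsupp.single (TD.attach m'' i) 1))
            = fun r => ∫ x in v..r, BX v x m'' * deriv (fun y => X y i) x :=
          funext fun r => hint v r m'' i
        rw [heq]
        exact intervalIntegral.continuous_primitive
          (fun a b => ((IH m'' hg v).mul (hderiv i)).intervalIntegrable a b) v
      · have hgs : TD.grade m = TD.grade (Finsupp.single τ 1) + TD.grade m' := by
          have := grade_add (Finsupp.single τ 1) m'
          rw [← hdecomp] at this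
          exact this
        have p1 : 0 < TD.grade (Finsupp.single τ 1) :=
          grade_pos (fun h => one_ne_zero (Finsupp.single_eq_zero.mp h))
        have p2 : 0 < TD.grade m' := grade_pos hnz
        have h1 : TD.grade (Finsupp.single τ 1) ≤ n := by omega
        have h2 : TD.grade m' ≤ n := by omega
        have heq : (fun r => BX v r m)
            = fun r => BX v r (Finsupp.single τ 1) * BX v r m' := by
          funext r
          conv_lhs => rw [hdecomp]
          exact hmul v r _ _
        rw [heq]
        exact (IH _ h1 v).mul (IH _ h2 v)
  have key : ∀ (n : ℕ) (m : TD.T →₀ ℕ), TD.grade m ≤ n → ∀ s u t : ℝ,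
      BX s t m = CK.conv (BX s u) (BX u t) m := by
    intro n
    induction n with
    | zero =>
      intro m hm s u t
      have hm0 : m = 0 := by
        by_contra h
        have := grade_pos h
        omega
      subst hm0
      rw [hone, conv_zero (hone s u) (hone u t)]
    | succ n IH =>
      intro m hm s u t
      rcases eq_or_ne m 0 with rfl | hm0
      · rw [hone, conv_zero (hone s u) (hone u t)]
      obtain ⟨τ, hdecomp⟩ := forest_decomp hm0
      set m' := m - Finsupp.single τ 1 with hm'
      rcases eq_or_ne m' 0 with hz | hnz
      · -- tree case
        rw [hz, add_zero] at hdecomp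
        subst hdecomp
        obtain ⟨⟨m'', i⟩, hτ0⟩ := TD.attach_bijective.2 τ
        have hτ : TD.attach m'' i = τ := hτ0
        subst hτ
        have hg : TD.grade m'' ≤ n := by
          rw [grade_single, TD.size_attach, one_mul] at hm
          have h2 : (m''.sum fun σ k => k * TD.size σ) = TD.grade m'' := rfl
          omega
        have hIH : ∀ r : ℝ, BX s r m''
            = (((MvPolynomial.basisMonomials TD.T ℝ).tensorProduct
                (MvPolynomial.basisMonomials TD.T ℝ)).repr (CK.Δ (TD.mono m''))).sum
              (fun p c => c * (BX s u p.1 * BX u r p.2)) := fun r => by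
          rw [IH m'' hg s u r, conv_def, Esum]
        have hii : ∀ (a b w : ℝ) (mm : TD.T →₀ ℕ),
            IntervalIntegrable (fun r => BX w r mm * deriv (fun y => X y i) r)
              MeasureTheory.volume a b :=
          fun a b w mm => ((hcontAll mm w).mul (hderiv i)).intervalIntegrable a b
        have lhs_split : BX s t (Finsupp.single (TD.attach m'' i) 1)
            = BX s u (Finsupp.single (TD.attach m'' i) 1)
              + ∫ r in u..t, BX s r m'' * deriv (fun y => X y i) r := by
          rw [hint s t m'' i, hint s u m'' i,
            ← intervalIntegral.integral_add_adjacent_intervals (hii s u s m'') (hii u t s m'')]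
        have expand : (∫ r in u..t, BX s r m'' * deriv (fun y => X y i) r)
            = (((MvPolynomial.basisMonomials TD.T ℝ).tensorProduct
                (MvPolynomial.basisMonomials TD.T ℝ)).repr (CK.Δ (TD.mono m''))).sum
              (fun p c => c * (BX s u p.1 * BX u t (Finsupp.single (TD.attach p.2 i) 1))) := by
          have e1 : (fun r => BX s r m'' * deriv (fun y => X y i) r)
              = fun r => ∑ p ∈ ((((MvPolynomial.basisMonomials TD.T ℝ).tensorProduct
                    (MvPolynomial.basisMonomials TD.T ℝ)).repr (CK.Δ (TD.mono m''))).support),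
                  ((((MvPolynomial.basisMonomials TD.T ℝ).tensorProduct
                    (MvPolynomial.basisMonomials TD.T ℝ)).repr (CK.Δ (TD.mono m''))) p
                      * BX s u p.1)
                    * (BX u r p.2 * deriv (fun y => X y i) r) := by
            funext r
            rw [hIH r, Finsupp.sum, Finset.sum_mul]
            exact Finset.sum_congr rfl fun p _ => by ring
          rw [e1, intervalIntegral.integral_finset_sum]
          · rw [Finsupp.sum]
            refine Finset.sum_congr rfl fun p _ => ?_
            rw [intervalIntegral.integral_const_mul, ← hint u t p.2 i, mul_assoc]
          · intro p _
            exact (continuous_const.mul ((hcontAll p.2 u).mul (hderiv i))).intervalIntegrable u t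
        have rhs_eq : CK.conv (BX s u) (BX u t) (Finsupp.single (TD.attach m'' i) 1)
            = BX s u (Finsupp.single (TD.attach m'' i) 1)
              + (((MvPolynomial.basisMonomials TD.T ℝ).tensorProduct
                  (MvPolynomial.basisMonomials TD.T ℝ)).repr (CK.Δ (TD.mono m''))).sum
                (fun p c => c * (BX s u p.1 * BX u t (Finsupp.single (TD.attach p.2 i) 1))) := by
          rw [conv_def, ← Bplus_mono, CK.Δ_Bplus, map_add, map_add, TensorProduct.map_tmul,
            LinearMap.mul'_apply, Bplus_mono, pairL_mono, pairL_one, hone u t, mul_one,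
            Esum_lTensor]
        rw [lhs_split, expand, rhs_eq]
      · -- product case
        have hgs : TD.grade m = TD.grade (Finsupp.single τ 1) + TD.grade m' := by
          have := grade_add (Finsupp.single τ 1) m'
          rw [← hdecomp] at this
          exact this
        have p1 : 0 < TD.grade (Finsupp.single τ 1) :=
          grade_pos (fun h => one_ne_zero (Finsupp.single_eq_zero.mp h))
        have p2 : 0 < TD.grade m' := grade_pos hnz
        have h1 : TD.grade (Finsupp.single τ 1) ≤ n := by omega
        have h2 : TD.grade m' ≤ n := by omega
        rw [hdecomp, hmul, conv_add (hone s u) (hmul s u) (hone u t) (hmul u t),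
          IH _ h1 s u t, IH _ h2 s u t]
  intro s _ u _ t _ m
  exact key (TD.grade m) m le_rfl s u t
end
end

section
/- Sewing lemma: let T > 0 and let Z̃:[0,T]×[0,T]→ℝ satisfy |Z̃_{st} − Z̃_{su} − Z̃_{ut}| ≤ C|t−u|^p|u−s|^q for all s,u,t ∈ [0,T], for constants C ≥ 0 and p,q > 0 with p+q > 1. Then there exists a function Y:[0,T]→ℝ, unique up to an additive constant, such that the remainder r_{st} := (Y_t − Y_s) − Z̃_{st} satisfies |r_{st}|/|t−s| → 0 as |t−s| → 0 (and r is the unique choice of remainder with this property making Z̃ + r the increment of a path). Moreover, for any s < t, Y_t − Y_s = lim Σ_{[u,v]∈𝒫} Z̃_{uv} along any sequence of partitions 𝒫 of [s,t] whose mesh tends to 0. -/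
noncomputable section

namespace Stmt4
open List Set Filter Topology

def rsum (Z : ℝ → ℝ → ℝ) : List ℝ → ℝ
  | a :: b :: l => Z a b + rsum Z (b :: l)
  | _ => 0

@[simp] lemma rsum_nil (Z : ℝ → ℝ → ℝ) : rsum Z [] = 0 := rfl
@[simp] lemma rsum_single (Z : ℝ → ℝ → ℝ) (a : ℝ) : rsum Z [a] = 0 := rfl
@[simp] lemma rsum_cons_cons (Z : ℝ → ℝ → ℝ) (a b : ℝ) (l : List ℝ) :
    rsum Z (a :: b :: l) = Z a b + rsum Z (b :: l) := rfl

lemma rsum_append (Z : ℝ → ℝ → ℝ) :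
    ∀ (xs : List ℝ) (a : ℝ) (ys : List ℝ),
      rsum Z (xs ++ a :: ys) = rsum Z (xs ++ [a]) + rsum Z (a :: ys)
  | [], a, ys => by simp
  | [x], a, ys => by simp
  | x :: x' :: xs, a, ys => by
    have h := rsum_append Z (x' :: xs) a ys
    simp only [List.cons_append, rsum_cons_cons] at h ⊢
    rw [h]; ring


def ins (w : ℝ) : List ℝ → List ℝ
  | a :: b :: l => if w ≤ b then a :: w :: b :: l else a :: ins w (b :: l)
  | [a] => [a, w]
  | [] => [w]

lemma ins_cons_cons (w a b : ℝ) (l : List ℝ) :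
    ins w (a :: b :: l) = if w ≤ b then a :: w :: b :: l else a :: ins w (b :: l) := rfl


/-- Dyadic partition of `[s,t]` with `2^n` intervals. -/
noncomputable def dy : ℕ → ℝ → ℝ → List ℝ
  | 0, s, t => [s, t]
  | n+1, s, t => (dy n s ((s+t)/2)).dropLast ++ dy n ((s+t)/2) t

lemma dy_struct : ∀ (n : ℕ) (s t : ℝ),
    (dy n s t).length = 2^n + 1 ∧ (∃ xs, dy n s t = s :: xs) ∧ (∃ ys, dy n s t = ys ++ [t]) := by
  intro n
  induction n with
  | zero => intro s t; exact ⟨rfl, ⟨[t], rfl⟩, ⟨[s], rfl⟩⟩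
  | succ n ih =>
    intro s t
    set m := (s + t)/2 with hm
    obtain ⟨hlen1, ⟨xs1, hx1⟩, ⟨ys1, hy1⟩⟩ := ih s m
    obtain ⟨hlen2, ⟨xs2, hx2⟩, ⟨ys2, hy2⟩⟩ := ih m t
    have hylen : ys1.length = 2^n := by
      have := hlen1
      rw [hy1] at this
      simpa using this
    have hyne : ys1 ≠ [] := by
      intro h; rw [h] at hylen; simp at hylen
      exact (pow_ne_zero n two_ne_zero) hylen.symm
    have hdrop : (dy n s m).dropLast = ys1 := by
      rw [hy1]; simp
    have hyhead : ∃ ys', ys1 = s :: ys' := by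
      cases ys1 with
      | nil => exact absurd rfl hyne
      | cons y ys' =>
        have : y = s := by
          have := hx1.symm.trans hy1
          simp [List.cons_append] at this
          exact this.1.symm
        exact ⟨ys', by rw [this]⟩
    obtain ⟨ys', hys'⟩ := hyhead
    have hdy : dy (n+1) s t = ys1 ++ dy n m t := by
      show (dy n s m).dropLast ++ dy n m t = _
      rw [hdrop]
    refine ⟨?_, ?_, ?_⟩
    · rw [hdy, List.length_append, hylen, hlen2]; ring
    · exact ⟨ys' ++ dy n m t, by rw [hdy, hys']; simp⟩
    · refine ⟨ys1 ++ ys2, ?_⟩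
      rw [hdy, hy2, List.append_assoc]

lemma dy_rsum (Z : ℝ → ℝ → ℝ) (n : ℕ) (s t : ℝ) :
    rsum Z (dy (n+1) s t) = rsum Z (dy n s ((s+t)/2)) + rsum Z (dy n ((s+t)/2) t) := by
  set m := (s+t)/2
  obtain ⟨_, _, ⟨ys1, hy1⟩⟩ := dy_struct n s m
  obtain ⟨_, ⟨xs2, hx2⟩, _⟩ := dy_struct n m t
  have hdrop : (dy n s m).dropLast = ys1 := by rw [hy1]; simp
  have hdy : dy (n+1) s t = ys1 ++ m :: xs2 := by
    show (dy n s m).dropLast ++ dy n m t = _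
    rw [hdrop, hx2]
  rw [hdy, rsum_append Z ys1 m xs2, ← hy1, ← hx2]

lemma dy_chain : ∀ (n : ℕ) (s t : ℝ), s ≤ t →
    (dy n s t).IsChain (fun x y => x ≤ y ∧ y - x ≤ (t - s)/2^n)
    ∧ (∀ x ∈ dy n s t, s ≤ x ∧ x ≤ t) := by
  intro n
  induction n with
  | zero =>
    intro s t hst
    constructor
    · show List.IsChain _ [s, t]
      rw [List.isChain_cons_cons]
      refine ⟨⟨hst, by norm_num⟩, List.isChain_singleton t⟩
    · intro x hx
      have hx2 : x ∈ [s, t] := hx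
      have hx' : x = s ∨ x = t := by simpa using hx2
      rcases hx' with rfl | rfl
      · exact ⟨le_rfl, hst⟩
      · exact ⟨hst, le_rfl⟩
  | succ n ih =>
    intro s t hst
    set m := (s+t)/2 with hm
    have hsm : s ≤ m := by rw [hm]; linarith
    have hmt : m ≤ t := by rw [hm]; linarith
    have e1 : (m - s)/2^n = (t - s)/2^(n+1) := by
      rw [hm]; ring
    have e2 : (t - m)/2^n = (t - s)/2^(n+1) := by
      rw [hm]; ring
    obtain ⟨ch1, mem1⟩ := ih s m hsm
    obtain ⟨ch2, mem2⟩ := ih m t hmt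
    rw [e1] at ch1; rw [e2] at ch2
    obtain ⟨_, _, ⟨ys1, hy1⟩⟩ := dy_struct n s m
    obtain ⟨_, ⟨xs2, hx2⟩, _⟩ := dy_struct n m t
    have hdrop : (dy n s m).dropLast = ys1 := by rw [hy1]; simp
    have hdy : dy (n+1) s t = ys1 ++ m :: xs2 := by
      show (dy n s m).dropLast ++ dy n m t = _
      rw [hdrop, hx2]
    constructor
    · rw [hdy]
      rw [hy1] at ch1
      rw [List.isChain_append] at ch1 ⊢
      obtain ⟨cha, _, hlink⟩ := ch1
      refine ⟨cha, by rw [← hx2]; exact ch2, ?_⟩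
      intro x hx y hy
      simp only [List.head?_cons, Option.mem_def, Option.some.injEq] at hy
      subst hy
      exact hlink x hx m (by simp)
    · intro x hx
      rw [hdy] at hx
      rcases List.mem_append.mp hx with h | h
      · have : x ∈ dy n s m := by rw [hy1]; exact List.mem_append.mpr (Or.inl h)
        obtain ⟨h1, h2⟩ := mem1 x this
        exact ⟨h1, h2.trans hmt⟩
      · have : x ∈ dy n m t := by rw [hx2]; exact h
        obtain ⟨h1, h2⟩ := mem2 x this
        exact ⟨hsm.trans h1, h2⟩

lemma dy_zero (Z : ℝ → ℝ → ℝ) (s t : ℝ) : rsum Z (dy 0 s t) = Z s t := by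
  show rsum Z [s, t] = Z s t
  simp

noncomputable def insAll (base ws : List ℝ) : List ℝ := ws.foldl (fun acc w => ins w acc) base

@[simp] lemma insAll_nil (base : List ℝ) : insAll base [] = base := rfl
@[simp] lemma insAll_cons (base : List ℝ) (w : ℝ) (ws : List ℝ) :
    insAll base (w :: ws) = insAll (ins w base) ws := rfl


noncomputable def K0 (C p q : ℝ) : ℝ := C * (2:ℝ)^(-(p+q)) * (1 - (2:ℝ)^((1:ℝ)-(p+q)))⁻¹


/-- The sewing path: limit of dyadic Riemann sums on `[0,t]`. -/
noncomputable def Ylim (Z : ℝ → ℝ → ℝ) (t : ℝ) : ℝ :=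
  limUnder atTop (fun n => rsum Z (dy n 0 t))


lemma fin_telescope : ∀ (n : ℕ) (f : Fin (n+1) → ℝ),
    ∑ i : Fin n, (f i.succ - f i.castSucc) = f (Fin.last n) - f 0 := by
  intro n
  induction n with
  | zero => intro f; simp [Fin.last]
  | succ n ih =>
    intro f
    rw [Fin.sum_univ_castSucc]
    have h := ih (fun i => f i.castSucc)
    have e : (∑ i : Fin n, (f i.castSucc.succ - f i.castSucc.castSucc))
        = ∑ i : Fin n, (f i.succ.castSucc - f i.castSucc.castSucc) :=
      Finset.sum_congr rfl (fun i _ => by rw [Fin.succ_castSucc])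
    rw [e, h]
    rw [Fin.succ_last]
    have e0 : (Fin.castSucc 0 : Fin (n+2)) = 0 := by simp
    rw [← e0]
    ring


lemma pow_arith (θ : ℝ) (hθ : 0 < θ) (n : ℕ) (x : ℝ) (hx : 0 ≤ x) :
    (x / 2^(n+1)) ^ θ * 2^n = x^θ * (2:ℝ)^(-θ) * ((2:ℝ)^((1:ℝ)-θ))^n := by
  rw [Real.div_rpow hx (by positivity)]
  rw [← Real.rpow_natCast 2 (n+1), ← Real.rpow_natCast 2 n,
    ← Real.rpow_mul (by norm_num : (0:ℝ) ≤ 2)]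
  rw [← Real.rpow_natCast ((2:ℝ)^((1:ℝ)-θ)) n, ← Real.rpow_mul (by norm_num : (0:ℝ) ≤ 2)]
  rw [div_mul_eq_mul_div, div_eq_iff (by positivity)]
  rw [mul_assoc, mul_assoc, ← Real.rpow_add (by norm_num : (0:ℝ) < 2),
    ← Real.rpow_add (by norm_num : (0:ℝ) < 2)]
  congr 1
  push_cast
  ring


lemma pow_arith2 (θ : ℝ) (n : ℕ) (x : ℝ) (hx : 0 ≤ x) :
    (x / 2^n) ^ θ * 2^n = x^θ * ((2:ℝ)^((1:ℝ)-θ))^n := by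
  rw [Real.div_rpow hx (by positivity)]
  rw [← Real.rpow_natCast 2 n, ← Real.rpow_mul (by norm_num : (0:ℝ) ≤ 2)]
  rw [← Real.rpow_natCast ((2:ℝ)^((1:ℝ)-θ)) n, ← Real.rpow_mul (by norm_num : (0:ℝ) ≤ 2)]
  rw [div_mul_eq_mul_div, div_eq_iff (by positivity)]
  rw [mul_assoc, ← Real.rpow_add (by norm_num : (0:ℝ) < 2)]
  congr 1
  ring


section Main

variable {T C p q : ℝ} {Z : ℝ → ℝ → ℝ}


lemma Z_self (hC : 0 ≤ C) (hp : 0 < p)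
    (hZ : ∀ s ∈ Set.Icc (0 : ℝ) T, ∀ u ∈ Set.Icc (0 : ℝ) T, ∀ t ∈ Set.Icc (0 : ℝ) T,
      |Z s t - Z s u - Z u t| ≤ C * |t - u| ^ p * |u - s| ^ q)
    {a : ℝ} (ha : a ∈ Set.Icc (0 : ℝ) T) : Z a a = 0 := by
  have h := hZ a ha a ha a ha
  have : |a - a| = 0 := by simp
  rw [this, Real.zero_rpow hp.ne'] at h
  simp only [mul_zero, zero_mul] at h
  have : |Z a a| ≤ 0 := by
    have e : Z a a - Z a a - Z a a = -Z a a := by ring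
    rw [e, abs_neg] at h; exact h
  have := abs_nonneg (Z a a)
  have : |Z a a| = 0 := le_antisymm ‹|Z a a| ≤ 0› this
  exact abs_eq_zero.mp this

lemma ins_spec (hC : 0 ≤ C) (hp : 0 < p) (hq : 0 < q)
    (hZ : ∀ s ∈ Set.Icc (0 : ℝ) T, ∀ u ∈ Set.Icc (0 : ℝ) T, ∀ t ∈ Set.Icc (0 : ℝ) T,
      |Z s t - Z s u - Z u t| ≤ C * |t - u| ^ p * |u - s| ^ q)
    {δ : ℝ} (hδ : 0 ≤ δ) {w : ℝ} (hw : w ∈ Set.Icc (0 : ℝ) T) :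
    ∀ (l : List ℝ) (a : ℝ),
      (a :: l).IsChain (fun x y => x ≤ y ∧ y - x ≤ δ) →
      (∀ x ∈ a :: l, x ∈ Set.Icc (0 : ℝ) T) →
      a ≤ w → (∀ z, (a :: l).getLast? = some z → w ≤ z) →
      (ins w (a :: l)).IsChain (fun x y => x ≤ y ∧ y - x ≤ δ)
      ∧ ins w (a :: l) ~ w :: a :: l
      ∧ (∃ u, ins w (a :: l) = a :: u ∧ (a :: u).getLast? = (a :: l).getLast?)
      ∧ |rsum Z (ins w (a :: l)) - rsum Z (a :: l)| ≤ C * δ ^ (p + q) := by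
  intro l
  induction l with
  | nil =>
    intro a hch hmem haw hlast
    have hlw : w ≤ a := hlast a rfl
    have hwa : w = a := le_antisymm hlw haw
    have hZaa : Z a a = 0 := Z_self hC hp hZ (hmem a (by simp))
    subst hwa
    refine ⟨?_, ?_, ⟨[w], rfl, by simp⟩, ?_⟩
    · show IsChain _ [w, w]
      simp [List.isChain_cons_cons, hδ]
    · show [w, w] ~ [w, w]; exact Perm.refl _
    · show |rsum Z [w, w] - rsum Z [w]| ≤ _
      simp [hZaa]
      positivity
  | cons b l'' ih =>
    intro a hch hmem haw hlast
    rw [List.isChain_cons_cons] at hch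
    obtain ⟨⟨hab, habδ⟩, hch'⟩ := hch
    rw [ins_cons_cons]
    by_cases hwb : w ≤ b
    · rw [if_pos hwb]
      have ha : a ∈ Set.Icc (0:ℝ) T := hmem a (by simp)
      have hb : b ∈ Set.Icc (0:ℝ) T := hmem b (by simp)
      refine ⟨?_, ?_, ⟨w :: b :: l'', rfl, by simp⟩, ?_⟩
      · rw [List.isChain_cons_cons, List.isChain_cons_cons]
        exact ⟨⟨haw, by linarith⟩, ⟨hwb, by linarith⟩, hch'⟩
      · exact Perm.swap' w a (Perm.refl _) |>.symm |>.symm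
      · have hb' := hZ a ha w hw b hb
        have e : rsum Z (a :: w :: b :: l'') - rsum Z (a :: b :: l'')
            = -(Z a b - Z a w - Z w b) := by simp [rsum_cons_cons]; ring
        rw [e, abs_neg]
        refine hb'.trans ?_
        have h1 : |b - w| ^ p ≤ δ ^ p := by
          rw [abs_of_nonneg (by linarith)]
          exact Real.rpow_le_rpow (by linarith) (by linarith) hp.le
        have h2 : |w - a| ^ q ≤ δ ^ q := by
          rw [abs_of_nonneg (by linarith)]
          exact Real.rpow_le_rpow (by linarith) (by linarith) hq.le
        calc C * |b - w| ^ p * |w - a| ^ q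
            ≤ C * δ ^ p * δ ^ q := by
              apply mul_le_mul (mul_le_mul le_rfl h1 (by positivity) hC) h2 (by positivity)
              positivity
          _ = C * δ ^ (p + q) := by
              rw [Real.rpow_add' hδ (by positivity)]; ring
    · rw [if_neg hwb]
      have hbw : b ≤ w := le_of_not_ge hwb
      have hlast' : ∀ z, (b :: l'').getLast? = some z → w ≤ z := by
        intro z hz
        exact hlast z (by rwa [List.getLast?_cons_cons])
      obtain ⟨ch, pm, ⟨u, hu, hulast⟩, hrs⟩ :=
        ih b hch' (fun x hx => hmem x (List.mem_cons_of_mem a hx)) hbw hlast'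
      refine ⟨?_, ?_, ⟨ins w (b :: l''), rfl, ?_⟩, ?_⟩
      · rw [hu] at ch ⊢
        rw [List.isChain_cons_cons]
        exact ⟨⟨hab, habδ⟩, ch⟩
      · calc a :: ins w (b :: l'') ~ a :: w :: b :: l'' := Perm.cons a pm
          _ ~ w :: a :: b :: l'' := Perm.swap _ _ _
      · rw [hu, List.getLast?_cons_cons, hulast, List.getLast?_cons_cons]
      · rw [hu]
        have e1 : rsum Z (a :: b :: u) = Z a b + rsum Z (b :: u) := rfl
        have e2 : rsum Z (a :: b :: l'') = Z a b + rsum Z (b :: l'') := rfl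
        rw [hu] at hrs
        calc |rsum Z (a :: b :: u) - rsum Z (a :: b :: l'')|
            = |rsum Z (b :: u) - rsum Z (b :: l'')| := by rw [e1, e2]; ring_nf
          _ ≤ C * δ ^ (p + q) := hrs


lemma bracket_head : ∀ (l : List ℝ), l.IsChain (· ≤ ·) →
    ∀ x ∈ l, ∀ a, l.head? = some a → a ≤ x := by
  intro l
  induction l with
  | nil => intro _ x hx; simp at hx
  | cons b t ih =>
    intro hch x hx a ha
    simp only [List.head?_cons, Option.some.injEq] at ha
    subst ha
    rcases List.mem_cons.mp hx with rfl | hx'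
    · exact le_rfl
    · cases t with
      | nil => simp at hx'
      | cons c t' =>
        rw [List.isChain_cons_cons] at hch
        exact hch.1.trans (ih hch.2 x hx' c rfl)

lemma bracket_last : ∀ (l : List ℝ), l.IsChain (· ≤ ·) →
    ∀ x ∈ l, ∀ z, l.getLast? = some z → x ≤ z := by
  intro l
  induction l with
  | nil => intro _ x hx; simp at hx
  | cons b t ih =>
    intro hch x hx z hz
    cases t with
    | nil =>
      simp only [List.getLast?_singleton, Option.some.injEq] at hz
      simp only [List.mem_singleton] at hx
      subst hz; subst hx; exact le_rfl
    | cons c t' =>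
      rw [List.isChain_cons_cons] at hch
      rw [List.getLast?_cons_cons] at hz
      rcases List.mem_cons.mp hx with rfl | hx'
      · exact hch.1.trans (ih hch.2 c (by simp) z hz)
      · exact ih hch.2 x hx' z hz


lemma insAll_spec (hC : 0 ≤ C) (hp : 0 < p) (hq : 0 < q)
    (hZ : ∀ s ∈ Set.Icc (0 : ℝ) T, ∀ u ∈ Set.Icc (0 : ℝ) T, ∀ t ∈ Set.Icc (0 : ℝ) T,
      |Z s t - Z s u - Z u t| ≤ C * |t - u| ^ p * |u - s| ^ q)
    {δ : ℝ} (hδ : 0 ≤ δ) :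
    ∀ (ws : List ℝ) (l : List ℝ) (a : ℝ),
      (a :: l).IsChain (fun x y => x ≤ y ∧ y - x ≤ δ) →
      (∀ x ∈ a :: l, x ∈ Set.Icc (0 : ℝ) T) →
      (∀ w ∈ ws, w ∈ Set.Icc (0 : ℝ) T ∧ a ≤ w ∧
        (∀ z, (a :: l).getLast? = some z → w ≤ z)) →
      (insAll (a :: l) ws).IsChain (fun x y => x ≤ y ∧ y - x ≤ δ)
      ∧ insAll (a :: l) ws ~ ws ++ a :: l
      ∧ (∃ u, insAll (a :: l) ws = a :: u ∧ (a :: u).getLast? = (a :: l).getLast?)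
      ∧ |rsum Z (insAll (a :: l) ws) - rsum Z (a :: l)| ≤ ws.length * (C * δ ^ (p + q)) := by
  intro ws
  induction ws with
  | nil =>
    intro l a hch hmem _
    refine ⟨hch, by simp, ⟨l, rfl, rfl⟩, by simp⟩
  | cons w ws' ih =>
    intro l a hch hmem hws
    obtain ⟨hwT, haw, hwz⟩ := hws w (by simp)
    obtain ⟨ch1, pm1, ⟨u, hu, hulast⟩, hrs1⟩ :=
      ins_spec hC hp hq hZ hδ hwT l a hch hmem haw hwz
    simp only [insAll_cons, hu]
    have hmem' : ∀ x ∈ a :: u, x ∈ Set.Icc (0:ℝ) T := by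
      intro x hx
      rw [← hu] at hx
      rcases List.mem_cons.mp (pm1.mem_iff.mp hx) with h | h
      · rw [h]; exact hwT
      · exact hmem x h
    have hws' : ∀ w' ∈ ws', w' ∈ Set.Icc (0:ℝ) T ∧ a ≤ w' ∧
        (∀ z, (a :: u).getLast? = some z → w' ≤ z) := by
      intro w' hw'
      obtain ⟨h1, h2, h3⟩ := hws w' (by simp [hw'])
      exact ⟨h1, h2, fun z hz => h3 z (by rwa [← hulast])⟩
    rw [hu] at ch1
    obtain ⟨ch2, pm2, ⟨u2, hu2, hu2last⟩, hrs2⟩ := ih (u) a ch1 hmem' hws'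
    refine ⟨ch2, ?_, ⟨u2, hu2, by rw [hu2last, hulast]⟩, ?_⟩
    · calc insAll (a :: u) ws' ~ ws' ++ a :: u := pm2
        _ ~ ws' ++ w :: a :: l := by
            refine List.Perm.append_left ws' ?_
            rw [← hu]; exact pm1
        _ ~ (w :: ws') ++ a :: l := by
            simp only [List.cons_append]
            exact List.perm_middle
    · have : |rsum Z (insAll (a :: u) ws') - rsum Z (a :: l)|
          ≤ |rsum Z (insAll (a :: u) ws') - rsum Z (a :: u)|
            + |rsum Z (a :: u) - rsum Z (a :: l)| := abs_sub_le _ _ _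
      refine this.trans ?_
      rw [hu] at hrs1
      simp only [List.length_cons]
      push_cast
      nlinarith [hrs1, hrs2]

/-- Compare the Riemann sums of two partitions with the same endpoints. -/
lemma compare_rsum (hC : 0 ≤ C) (hp : 0 < p) (hq : 0 < q)
    (hZ : ∀ s ∈ Set.Icc (0 : ℝ) T, ∀ u ∈ Set.Icc (0 : ℝ) T, ∀ t ∈ Set.Icc (0 : ℝ) T,
      |Z s t - Z s u - Z u t| ≤ C * |t - u| ^ p * |u - s| ^ q)
    {δ δ' : ℝ} (hδ : 0 ≤ δ) (hδ' : 0 ≤ δ')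
    (l l' : List ℝ) (a a' : ℝ)
    (hch : (a :: l).IsChain (fun x y => x ≤ y ∧ y - x ≤ δ))
    (hch' : (a' :: l').IsChain (fun x y => x ≤ y ∧ y - x ≤ δ'))
    (hmem : ∀ x ∈ a :: l, x ∈ Set.Icc (0 : ℝ) T)
    (hmem' : ∀ x ∈ a' :: l', x ∈ Set.Icc (0 : ℝ) T)
    (hhead : a = a')
    (hlast : (a :: l).getLast? = (a' :: l').getLast?) :
    |rsum Z (a :: l) - rsum Z (a' :: l')|
      ≤ (a' :: l').length * (C * δ ^ (p + q)) + (a :: l).length * (C * δ' ^ (p + q)) := by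
  have hle : (a :: l).IsChain (· ≤ ·) := hch.imp (fun _ _ h => h.1)
  have hle' : (a' :: l').IsChain (· ≤ ·) := hch'.imp (fun _ _ h => h.1)
  -- elements of a' :: l' are bracketed by endpoints of a :: l
  have hws : ∀ w ∈ a' :: l', w ∈ Set.Icc (0:ℝ) T ∧ a ≤ w ∧
      (∀ z, (a :: l).getLast? = some z → w ≤ z) := by
    intro w hw
    refine ⟨hmem' w hw, ?_, ?_⟩
    · rw [hhead]; exact bracket_head _ hle' w hw a' rfl
    · intro z hz
      exact bracket_last _ hle' w hw z (by rw [← hlast]; exact hz)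
  have hws' : ∀ w ∈ a :: l, w ∈ Set.Icc (0:ℝ) T ∧ a' ≤ w ∧
      (∀ z, (a' :: l').getLast? = some z → w ≤ z) := by
    intro w hw
    refine ⟨hmem w hw, ?_, ?_⟩
    · rw [← hhead]; exact bracket_head _ hle w hw a rfl
    · intro z hz
      exact bracket_last _ hle w hw z (by rw [hlast]; exact hz)
  obtain ⟨ch1, pm1, _, hb1⟩ := insAll_spec hC hp hq hZ hδ (a' :: l') l a hch hmem hws
  obtain ⟨ch2, pm2, _, hb2⟩ := insAll_spec hC hp hq hZ hδ' (a :: l) l' a' hch' hmem' hws'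
  have hMM : insAll (a :: l) (a' :: l') = insAll (a' :: l') (a :: l) := by
    refine (fun hp h1 h2 => List.Perm.eq_of_pairwise' (r := (· ≤ ·)) h1 h2 hp) ?_ ?_ ?_
    · exact pm1.trans (List.perm_append_comm.trans pm2.symm)
    · exact List.isChain_iff_pairwise.mp (ch1.imp (fun _ _ h => h.1))
    · exact List.isChain_iff_pairwise.mp (ch2.imp (fun _ _ h => h.1))
  calc |rsum Z (a :: l) - rsum Z (a' :: l')|
      ≤ |rsum Z (insAll (a :: l) (a' :: l')) - rsum Z (a :: l)|
        + |rsum Z (insAll (a' :: l') (a :: l)) - rsum Z (a' :: l')| := by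
        rw [hMM, abs_sub_comm (rsum Z (insAll (a' :: l') (a :: l))) (rsum Z (a :: l))]
        exact abs_sub_le _ _ _
    _ ≤ _ := add_le_add hb1 hb2

/-- one dyadic refinement step -/
lemma dy_step (hC : 0 ≤ C) (hp : 0 < p) (hq : 0 < q)
    (hZ : ∀ s ∈ Set.Icc (0 : ℝ) T, ∀ u ∈ Set.Icc (0 : ℝ) T, ∀ t ∈ Set.Icc (0 : ℝ) T,
      |Z s t - Z s u - Z u t| ≤ C * |t - u| ^ p * |u - s| ^ q) :
    ∀ (n : ℕ) (s t : ℝ), s ∈ Set.Icc (0:ℝ) T → t ∈ Set.Icc (0:ℝ) T → s ≤ t →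
      |rsum Z (dy (n+1) s t) - rsum Z (dy n s t)|
        ≤ C * ((t - s)/2^(n+1)) ^ (p+q) * 2^n := by
  intro n
  induction n with
  | zero =>
    intro s t hs ht hst
    have hm : (s+t)/2 ∈ Set.Icc (0:ℝ) T :=
      ⟨by linarith [hs.1, ht.1], by linarith [hs.2, ht.2]⟩
    have h := hZ s hs ((s+t)/2) hm t ht
    rw [dy_rsum Z 0 s t, dy_zero, dy_zero, dy_zero]
    have e : Z s ((s+t)/2) + Z ((s+t)/2) t - Z s t
        = -(Z s t - Z s ((s+t)/2) - Z ((s+t)/2) t) := by ring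
    rw [e, abs_neg]
    refine h.trans ?_
    have e1 : |t - (s+t)/2| = (t-s)/2 := by rw [abs_of_nonneg (by linarith)]; ring
    have e2 : |(s+t)/2 - s| = (t-s)/2 := by rw [abs_of_nonneg (by linarith)]; ring
    rw [e1, e2, mul_assoc,
      ← Real.rpow_add' (by linarith : (0:ℝ) ≤ (t-s)/2) (by positivity : p+q ≠ 0)]
    have e3 : ((t-s)/2 : ℝ) = (t-s)/2^(0+1) := by norm_num
    rw [e3]
    norm_num
  | succ n ih =>
    intro s t hs ht hst
    set m := (s+t)/2 with hmdef
    have hsm : s ≤ m := by rw [hmdef]; linarith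
    have hmt : m ≤ t := by rw [hmdef]; linarith
    have hm : m ∈ Set.Icc (0:ℝ) T :=
      ⟨by linarith [hs.1], by linarith [ht.2]⟩
    have h1 := ih s m hs hm hsm
    have h2 := ih m t hm ht hmt
    have e : rsum Z (dy (n+2) s t) - rsum Z (dy (n+1) s t)
        = (rsum Z (dy (n+1) s m) - rsum Z (dy n s m))
          + (rsum Z (dy (n+1) m t) - rsum Z (dy n m t)) := by
      rw [dy_rsum Z (n+1) s t, dy_rsum Z n s t]
      ring
    have e1 : (m - s)/2^(n+1) = (t-s)/2^(n+2) := by rw [hmdef]; ring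
    have e2 : (t - m)/2^(n+1) = (t-s)/2^(n+2) := by rw [hmdef]; ring
    rw [e1] at h1; rw [e2] at h2
    calc |rsum Z (dy (n+2) s t) - rsum Z (dy (n+1) s t)|
        ≤ C * ((t-s)/2^(n+2)) ^ (p+q) * 2^n + C * ((t-s)/2^(n+2)) ^ (p+q) * 2^n := by
          rw [e]; exact (abs_add_le _ _).trans (add_le_add h1 h2)
      _ = C * ((t-s)/2^(n+2)) ^ (p+q) * 2^(n+1) := by ring

lemma dy_uniform (hC : 0 ≤ C) (hp : 0 < p) (hq : 0 < q) (hpq : 1 < p + q)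
    (hZ : ∀ s ∈ Set.Icc (0 : ℝ) T, ∀ u ∈ Set.Icc (0 : ℝ) T, ∀ t ∈ Set.Icc (0 : ℝ) T,
      |Z s t - Z s u - Z u t| ≤ C * |t - u| ^ p * |u - s| ^ q)
    (n : ℕ) {s t : ℝ} (hs : s ∈ Set.Icc (0:ℝ) T) (ht : t ∈ Set.Icc (0:ℝ) T) (hst : s ≤ t) :
    |rsum Z (dy n s t) - Z s t| ≤ K0 C p q * (t-s)^(p+q) := by
  rw [show K0 C p q = C * (2:ℝ)^(-(p+q)) * (1 - (2:ℝ)^((1:ℝ)-(p+q)))⁻¹ from rfl]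
  set θ := p + q with hθdef
  set ρ := (2:ℝ)^((1:ℝ)-θ) with hρdef
  have hρ0 : 0 < ρ := Real.rpow_pos_of_pos (by norm_num) _
  have hρ1 : ρ < 1 := Real.rpow_lt_one_of_one_lt_of_neg (by norm_num) (by linarith)
  have key : ∀ n : ℕ, |rsum Z (dy n s t) - Z s t|
      ≤ C * (2:ℝ)^(-θ) * (t-s)^θ * ∑ j ∈ Finset.range n, ρ^j := by
    intro n
    induction n with
    | zero => rw [dy_zero]; simp
    | succ n ih =>
      have hstep := dy_step hC hp hq hZ n s t hs ht hst
      have harith : C * ((t - s)/2^(n+1)) ^ θ * 2^n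
          = C * (2:ℝ)^(-θ) * (t-s)^θ * ρ^n := by
        rw [mul_assoc, pow_arith θ (by linarith) n (t-s) (by linarith)]
        ring
      rw [harith] at hstep
      calc |rsum Z (dy (n+1) s t) - Z s t|
          ≤ |rsum Z (dy (n+1) s t) - rsum Z (dy n s t)| + |rsum Z (dy n s t) - Z s t| :=
            abs_sub_le _ _ _
        _ ≤ C * (2:ℝ)^(-θ) * (t-s)^θ * ρ^n
            + C * (2:ℝ)^(-θ) * (t-s)^θ * ∑ j ∈ Finset.range n, ρ^j := add_le_add hstep ih
        _ = C * (2:ℝ)^(-θ) * (t-s)^θ * ∑ j ∈ Finset.range (n+1), ρ^j := by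
            rw [Finset.sum_range_succ]; ring
  refine (key n).trans ?_
  have hsum : ∑ j ∈ Finset.range n, ρ^j ≤ (1 - ρ)⁻¹ := by
    rw [← tsum_geometric_of_lt_one hρ0.le hρ1]
    exact Summable.sum_le_tsum _ (fun j _ => by positivity)
      (summable_geometric_of_lt_one hρ0.le hρ1)
  calc C * (2:ℝ)^(-θ) * (t-s)^θ * ∑ j ∈ Finset.range n, ρ^j
      ≤ C * (2:ℝ)^(-θ) * (t-s)^θ * (1 - ρ)⁻¹ := by
        apply mul_le_mul_of_nonneg_left hsum
        have : (0:ℝ) ≤ (t-s)^θ := Real.rpow_nonneg (by linarith) _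
        positivity
    _ = C * (2:ℝ)^(-θ) * (1 - ρ)⁻¹ * (t-s)^θ := by ring

lemma Ylim_tendsto (hC : 0 ≤ C) (hp : 0 < p) (hq : 0 < q) (hpq : 1 < p + q)
    (hZ : ∀ s ∈ Set.Icc (0 : ℝ) T, ∀ u ∈ Set.Icc (0 : ℝ) T, ∀ t ∈ Set.Icc (0 : ℝ) T,
      |Z s t - Z s u - Z u t| ≤ C * |t - u| ^ p * |u - s| ^ q)
    {t : ℝ} (ht : t ∈ Set.Icc (0:ℝ) T) :
    Tendsto (fun n => rsum Z (dy n 0 t)) atTop (𝓝 (Ylim Z t)) := by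
  have h0 : (0:ℝ) ∈ Set.Icc (0:ℝ) T := ⟨le_rfl, ht.1.trans ht.2⟩
  set θ := p + q with hθdef
  set ρ := (2:ℝ)^((1:ℝ)-θ) with hρdef
  have hρ1 : ρ < 1 := Real.rpow_lt_one_of_one_lt_of_neg (by norm_num) (by linarith)
  have hcau : CauchySeq (fun n => rsum Z (dy n 0 t)) := by
    apply cauchySeq_of_le_geometric ρ (C * t^θ * (2:ℝ)^(-θ)) hρ1
    intro n
    rw [Real.dist_eq]
    have := dy_step hC hp hq hZ n 0 t h0 ht ht.1
    rw [abs_sub_comm] at this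
    refine this.trans ?_
    have : C * ((t - 0)/2^(n+1)) ^ θ * 2^n = C * t^θ * (2:ℝ)^(-θ) * ρ^n := by
      rw [mul_assoc, pow_arith θ (by linarith) (n) (t-0) (by linarith [ht.1])]
      rw [sub_zero]; ring
    rw [this]
  exact hcau.tendsto_limUnder


/-- Master estimate (A). -/
lemma master_le (hC : 0 ≤ C) (hp : 0 < p) (hq : 0 < q) (hpq : 1 < p + q) (hT : 0 < T)
    (hZ : ∀ s ∈ Set.Icc (0 : ℝ) T, ∀ u ∈ Set.Icc (0 : ℝ) T, ∀ t ∈ Set.Icc (0 : ℝ) T,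
      |Z s t - Z s u - Z u t| ≤ C * |t - u| ^ p * |u - s| ^ q)
    {s t : ℝ} (hs : s ∈ Set.Icc (0:ℝ) T) (ht : t ∈ Set.Icc (0:ℝ) T) (hst : s ≤ t) :
    |Ylim Z t - Ylim Z s - Z s t| ≤ K0 C p q * (t-s)^(p+q) := by
  have h0 : (0:ℝ) ∈ Set.Icc (0:ℝ) T := ⟨le_rfl, hT.le⟩
  set θ := p + q with hθdef
  set ρ := (2:ℝ)^((1:ℝ)-θ) with hρdef
  have hρ0 : (0:ℝ) < ρ := Real.rpow_pos_of_pos (by norm_num) _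
  have hρ1 : ρ < 1 := Real.rpow_lt_one_of_one_lt_of_neg (by norm_num) (by linarith)
  have hs0 : 0 ≤ s := hs.1
  have hsT : s ≤ T := hs.2
  have htT : t ≤ T := ht.2
  have ht0 : 0 ≤ t := ht.1
  have key : ∀ n : ℕ, |rsum Z (dy n 0 t) - (rsum Z (dy n 0 s) + rsum Z (dy n s t))|
      ≤ 5 * C * T^θ * ρ^n := by
    intro n
    obtain ⟨hlen1, ⟨xs1, hx1⟩, ⟨ys1, hy1⟩⟩ := dy_struct n 0 s
    obtain ⟨hlen2, ⟨xs2, hx2⟩, ⟨ys2, hy2⟩⟩ := dy_struct n s t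
    obtain ⟨hlen3, ⟨xs3, hx3⟩, ⟨ys3, hy3⟩⟩ := dy_struct n 0 t
    have hylen1 : ys1.length = 2^n := by
      have := hlen1; rw [hy1] at this; simpa using this
    have hxlen2 : xs2.length = 2^n := by
      have := hlen2; rw [hx2] at this; simpa using this
    have hyne1 : ys1 ≠ [] := by
      intro h; rw [h] at hylen1; simp at hylen1
      exact (pow_ne_zero n two_ne_zero) hylen1.symm
    obtain ⟨ys1', rfl⟩ : ∃ ys1', ys1 = 0 :: ys1' := by
      cases ys1 with
      | nil => exact absurd rfl hyne1
      | cons y ys' =>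
        have : y = 0 := by
          have := hx1.symm.trans hy1
          simp [List.cons_append] at this
          exact this.1.symm
        exact ⟨ys', by rw [this]⟩
    -- the glued partition Q of [0,t] passing through s
    set Q : List ℝ := (0 :: ys1') ++ s :: xs2 with hQ
    have hQ' : Q = 0 :: (ys1' ++ s :: xs2) := by rw [hQ, List.cons_append]
    have hQsum : rsum Z Q = rsum Z (dy n 0 s) + rsum Z (dy n s t) := by
      rw [hQ, rsum_append Z (0 :: ys1') s xs2, ← hy1, ← hx2]
    -- chain property of Q with mesh T/2^n
    have hmono : ∀ (u v : ℝ), 0 ≤ v - u → v - u ≤ T → ∀ x y : ℝ,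
        (x ≤ y ∧ y - x ≤ (v-u)/2^n) → (x ≤ y ∧ y - x ≤ T/2^n) := by
      intro u v huv hT' x y hxy
      refine ⟨hxy.1, hxy.2.trans ?_⟩
      apply div_le_div_of_nonneg_right ?_ (by positivity)
      · linarith
    have ch1 := (dy_chain n 0 s hs0).1
    have mem1 := (dy_chain n 0 s hs0).2
    have ch2 := (dy_chain n s t hst).1
    have mem2 := (dy_chain n s t hst).2
    have ch3 := (dy_chain n 0 t ht0).1
    have mem3 := (dy_chain n 0 t ht0).2
    have ch1' : (dy n 0 s).IsChain (fun x y => x ≤ y ∧ y - x ≤ T/2^n) :=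
      ch1.imp (fun x y h => hmono 0 s (by linarith) (by linarith) x y (by simpa using h))
    have ch2' : (dy n s t).IsChain (fun x y => x ≤ y ∧ y - x ≤ T/2^n) :=
      ch2.imp (fun x y h => hmono s t (by linarith) (by linarith) x y h)
    have ch3' : (dy n 0 t).IsChain (fun x y => x ≤ y ∧ y - x ≤ T/2^n) :=
      ch3.imp (fun x y h => hmono 0 t (by linarith) (by linarith) x y (by simpa using h))
    have chQ : Q.IsChain (fun x y => x ≤ y ∧ y - x ≤ T/2^n) := by
      rw [hQ]
      rw [hy1] at ch1'
      rw [List.isChain_append] at ch1' ⊢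
      obtain ⟨cha, _, hlink⟩ := ch1'
      refine ⟨cha, by rw [← hx2]; exact ch2', ?_⟩
      intro x hx y hy
      simp only [List.head?_cons, Option.mem_def, Option.some.injEq] at hy
      subst hy
      exact hlink x hx s (by simp)
    have memQ : ∀ x ∈ Q, x ∈ Set.Icc (0:ℝ) T := by
      intro x hx
      rw [hQ] at hx
      rcases List.mem_append.mp hx with h | h
      · have : x ∈ dy n 0 s := by rw [hy1]; exact List.mem_append.mpr (Or.inl h)
        obtain ⟨h1, h2⟩ := mem1 x this
        exact ⟨h1, by linarith⟩
      · have : x ∈ dy n s t := by rw [hx2]; exact h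
        obtain ⟨h1, h2⟩ := mem2 x this
        exact ⟨by linarith, by linarith⟩
    have memdy : ∀ x ∈ dy n 0 t, x ∈ Set.Icc (0:ℝ) T := by
      intro x hx
      obtain ⟨h1, h2⟩ := mem3 x hx
      exact ⟨h1, by linarith⟩
    have hlastQ : Q.getLast? = some t := by
      rw [hQ, hx2.symm.trans hy2, ← List.append_assoc]
      exact List.getLast?_concat
    have hlastdy : (dy n 0 t).getLast? = some t := by
      rw [hy3]; exact List.getLast?_concat
    -- apply the comparison
    have hcomp := compare_rsum hC hp hq hZ
      (by positivity : (0:ℝ) ≤ T/2^n) (by positivity : (0:ℝ) ≤ T/2^n)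
      xs3 (ys1' ++ s :: xs2) 0 0
      (by rw [← hx3]; exact ch3') (by rw [← hQ']; exact chQ)
      (by rw [← hx3]; exact memdy) (by rw [← hQ']; exact memQ)
      rfl (by rw [← hx3, ← hQ', hlastQ, hlastdy])
    rw [← hx3, ← hQ'] at hcomp
    rw [hQsum] at hcomp
    refine hcomp.trans ?_
    have hlQ : (Q.length : ℝ) = 2^(n+1) + 1 := by
      rw [hQ]
      simp only [List.length_append, List.length_cons]
      have : ys1'.length = 2^n - 1 := by
        have := hylen1; simp at this; omega
      push_cast [this, hxlen2]
      have h1 : (1:ℝ) ≤ (2:ℝ)^n := one_le_pow₀ (by norm_num)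
      have e : ((2^n - 1 : ℕ) : ℝ) = (2:ℝ)^n - 1 := by
        push_cast [Nat.cast_sub (Nat.one_le_two_pow)]
        ring
      rw [e]; ring
    have hldy : ((dy n 0 t).length : ℝ) = 2^n + 1 := by
      rw [hlen3]; push_cast; ring
    rw [hlQ, hldy]
    have hbound : ((2:ℝ)^(n+1) + 1) * (C * (T/2^n)^θ) + ((2:ℝ)^n + 1) * (C * (T/2^n)^θ)
        ≤ (5 * 2^n) * (C * (T/2^n)^θ) := by
      have hnn : (0:ℝ) ≤ C * (T/2^n)^θ := by
        have := Real.rpow_nonneg (by positivity : (0:ℝ) ≤ T/2^n) θ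
        positivity
      rw [← add_mul]
      apply mul_le_mul_of_nonneg_right ?_ hnn
      have h1 : (1:ℝ) ≤ (2:ℝ)^n := one_le_pow₀ (by norm_num)
      rw [pow_succ]
      linarith
    refine hbound.trans ?_
    have : (5 * (2:ℝ)^n) * (C * (T/2^n)^θ) = 5 * C * ((T/2^n)^θ * 2^n) := by ring
    rw [this, pow_arith2 θ n T hT.le, ← hρdef]
    exact le_of_eq (by ring)
  have hdyu : ∀ n : ℕ, |rsum Z (dy n s t) - Z s t| ≤ K0 C p q * (t-s)^θ := fun n =>
    dy_uniform hC hp hq hpq hZ n hs ht hst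
  have hFle : ∀ n : ℕ, |rsum Z (dy n 0 t) - rsum Z (dy n 0 s) - Z s t|
      ≤ 5*C*T^θ*ρ^n + K0 C p q * (t-s)^θ := by
    intro n
    have e : rsum Z (dy n 0 t) - rsum Z (dy n 0 s) - Z s t
        = (rsum Z (dy n 0 t) - (rsum Z (dy n 0 s) + rsum Z (dy n s t)))
          + (rsum Z (dy n s t) - Z s t) := by ring
    rw [e]
    exact (abs_add_le _ _).trans (add_le_add (key n) (hdyu n))
  have h1 := Ylim_tendsto hC hp hq hpq hZ ht
  have h2 := Ylim_tendsto hC hp hq hpq hZ hs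
  have hF : Tendsto (fun n => |rsum Z (dy n 0 t) - rsum Z (dy n 0 s) - Z s t|) atTop
      (𝓝 |Ylim Z t - Ylim Z s - Z s t|) := ((h1.sub h2).sub tendsto_const_nhds).abs
  have hG : Tendsto (fun n : ℕ => 5*C*T^θ*ρ^n + K0 C p q * (t-s)^θ) atTop
      (𝓝 (K0 C p q * (t-s)^θ)) := by
    have h3 := (tendsto_pow_atTop_nhds_zero_of_lt_one hρ0.le hρ1).const_mul (5*C*T^θ)
    simpa using h3.add_const (K0 C p q * (t-s)^θ)
  exact le_of_tendsto_of_tendsto' hF hG hFle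


lemma K0_nonneg (hC : 0 ≤ C) (hpq : 1 < p + q) : 0 ≤ K0 C p q := by
  have hρ1 : (2:ℝ)^((1:ℝ)-(p+q)) < 1 :=
    Real.rpow_lt_one_of_one_lt_of_neg (by norm_num) (by linarith)
  have h2 : (0:ℝ) < (2:ℝ)^(-(p+q)) := Real.rpow_pos_of_pos (by norm_num) _
  have h3 : (0:ℝ) ≤ (1 - (2:ℝ)^((1:ℝ)-(p+q)))⁻¹ := inv_nonneg.mpr (by linarith)
  unfold K0
  positivity


lemma master_abs (hC : 0 ≤ C) (hp : 0 < p) (hq : 0 < q) (hpq : 1 < p + q) (hT : 0 < T)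
    (hZ : ∀ s ∈ Set.Icc (0 : ℝ) T, ∀ u ∈ Set.Icc (0 : ℝ) T, ∀ t ∈ Set.Icc (0 : ℝ) T,
      |Z s t - Z s u - Z u t| ≤ C * |t - u| ^ p * |u - s| ^ q)
    {s t : ℝ} (hs : s ∈ Set.Icc (0:ℝ) T) (ht : t ∈ Set.Icc (0:ℝ) T) :
    |Ylim Z t - Ylim Z s - Z s t| ≤ (K0 C p q + C) * |t-s|^(p+q) := by
  have hK0 := K0_nonneg hC hpq
  rcases le_total s t with hst | hts
  · have h := master_le hC hp hq hpq hT hZ hs ht hst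
    rw [abs_of_nonneg (by linarith : (0:ℝ) ≤ t - s)]
    refine h.trans ?_
    have : (0:ℝ) ≤ (t-s)^(p+q) := Real.rpow_nonneg (by linarith) _
    nlinarith
  · have h := master_le hC hp hq hpq hT hZ ht hs hts
    have hZsym : |Z s t + Z t s| ≤ C * (s-t)^(p+q) := by
      have h2 := hZ s hs t ht s hs
      rw [Z_self hC hp hZ hs] at h2
      have e : |(0:ℝ) - Z s t - Z t s| = |Z s t + Z t s| := by
        rw [show (0:ℝ) - Z s t - Z t s = -(Z s t + Z t s) by ring, abs_neg]
      rw [e] at h2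
      refine h2.trans ?_
      rw [abs_sub_comm t s, abs_of_nonneg (by linarith : (0:ℝ) ≤ s - t), mul_assoc,
        ← Real.rpow_add' (by linarith) (by positivity : p + q ≠ 0)]
    have e : Ylim Z t - Ylim Z s - Z s t
        = -(Ylim Z s - Ylim Z t - Z t s) - (Z s t + Z t s) := by ring
    rw [e, show -(Ylim Z s - Ylim Z t - Z t s) - (Z s t + Z t s)
        = -((Ylim Z s - Ylim Z t - Z t s) + (Z s t + Z t s)) by ring, abs_neg,
      abs_of_nonpos (by linarith : t - s ≤ 0), neg_sub]
    refine (abs_add_le _ _).trans ?_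
    nlinarith [Real.rpow_nonneg (show (0:ℝ) ≤ s - t by linarith) (p+q)]

end Main
end Stmt4
/-! ### STATEMENT 4 (Sewing lemma)
If `Z̃ : [0,T]² → ℝ` satisfies `|Z̃_{st} − Z̃_{su} − Z̃_{ut}| ≤ C|t−u|^p|u−s|^q` with
`p, q > 0`, `p + q > 1`, then there is `Y : [0,T] → ℝ`, unique up to an additive
constant, whose remainder `r_{st} = (Y_t − Y_s) − Z̃_{st}` satisfies
`|r_{st}|/|t−s| → 0` as `|t−s| → 0`; moreover for `s < t`, `Y_t − Y_s` is the limit of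
`Σ_{[u,v]∈𝒫} Z̃_{uv}` along partitions of `[s,t]` with mesh tending to `0`. -/
theorem stmt_4 (T : ℝ) (hT : 0 < T) (Zt : ℝ → ℝ → ℝ) (C p q : ℝ)
    (hC : 0 ≤ C) (hp : 0 < p) (hq : 0 < q) (hpq : 1 < p + q)
    (hZ : ∀ s ∈ Set.Icc (0 : ℝ) T, ∀ u ∈ Set.Icc (0 : ℝ) T, ∀ t ∈ Set.Icc (0 : ℝ) T,
      |Zt s t - Zt s u - Zt u t| ≤ C * |t - u| ^ p * |u - s| ^ q) :
    ∃ Y : ℝ → ℝ,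
      (∀ ε > (0 : ℝ), ∃ δ > (0 : ℝ), ∀ s ∈ Set.Icc (0 : ℝ) T, ∀ t ∈ Set.Icc (0 : ℝ) T,
        |t - s| ≤ δ → |Y t - Y s - Zt s t| ≤ ε * |t - s|) ∧
      (∀ Y' : ℝ → ℝ,
        (∀ ε > (0 : ℝ), ∃ δ > (0 : ℝ), ∀ s ∈ Set.Icc (0 : ℝ) T, ∀ t ∈ Set.Icc (0 : ℝ) T,
          |t - s| ≤ δ → |Y' t - Y' s - Zt s t| ≤ ε * |t - s|) →
        ∃ c : ℝ, ∀ t ∈ Set.Icc (0 : ℝ) T, Y' t = Y t + c) ∧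
      (∀ s ∈ Set.Icc (0 : ℝ) T, ∀ t ∈ Set.Icc (0 : ℝ) T, s < t →
        ∀ ε > (0 : ℝ), ∃ δ > (0 : ℝ), ∀ (n : ℕ) (c : Fin (n + 1) → ℝ),
          c 0 = s → c (Fin.last n) = t →
          (∀ i : Fin n, c i.castSucc ≤ c i.succ) →
          (∀ i : Fin n, c i.succ - c i.castSucc ≤ δ) →
          |(∑ i : Fin n, Zt (c i.castSucc) (c i.succ)) - (Y t - Y s)| ≤ ε) := by
  classical
  set Y : ℝ → ℝ := Stmt4.Ylim Zt with hYdef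
  set K1 : ℝ := Stmt4.K0 C p q + C with hK1def
  have hK0 := Stmt4.K0_nonneg hC hpq
  have hK1 : 0 ≤ K1 := by rw [hK1def]; linarith
  have hK11 : (0:ℝ) < K1 + 1 := by linarith
  have hθ1 : (1:ℝ) < p + q := hpq
  have hmaster : ∀ s ∈ Set.Icc (0:ℝ) T, ∀ t ∈ Set.Icc (0:ℝ) T,
      |Y t - Y s - Zt s t| ≤ K1 * |t-s|^(p+q) := fun s hs t ht =>
    Stmt4.master_abs hC hp hq hpq hT hZ hs ht
  -- Property 1
  have hprop1 : ∀ ε > (0 : ℝ), ∃ δ > (0 : ℝ), ∀ s ∈ Set.Icc (0 : ℝ) T,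
      ∀ t ∈ Set.Icc (0 : ℝ) T,
      |t - s| ≤ δ → |Y t - Y s - Zt s t| ≤ ε * |t - s| := by
    intro ε hε
    refine ⟨(ε/(K1+1))^((1:ℝ)/(p+q-1)), Real.rpow_pos_of_pos (by positivity) _, ?_⟩
    intro s hs t ht hd
    have h := hmaster s hs t ht
    have habs : (0:ℝ) ≤ |t-s| := abs_nonneg _
    have hsplit : |t-s|^(p+q) = |t-s|^(p+q-1) * |t-s| := by
      nth_rewrite 3 [← Real.rpow_one |t-s|]
      rw [← Real.rpow_add' habs (by intro hcon; linarith : (p+q-1) + 1 ≠ 0)]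
      norm_num
    have hmono : |t-s|^(p+q-1) ≤ ((ε/(K1+1))^((1:ℝ)/(p+q-1)))^(p+q-1) :=
      Real.rpow_le_rpow habs hd (by linarith)
    have heval : ((ε/(K1+1))^((1:ℝ)/(p+q-1)))^(p+q-1) = ε/(K1+1) := by
      rw [← Real.rpow_mul (by positivity : (0:ℝ) ≤ ε/(K1+1)), one_div,
        inv_mul_cancel₀ (by intro hcon; linarith : p+q-1 ≠ 0), Real.rpow_one]
    calc |Y t - Y s - Zt s t| ≤ K1 * |t-s|^(p+q) := h
      _ = K1 * |t-s|^(p+q-1) * |t-s| := by rw [hsplit]; ring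
      _ ≤ K1 * (ε/(K1+1)) * |t-s| := by
          refine mul_le_mul_of_nonneg_right ?_ habs
          exact mul_le_mul_of_nonneg_left (hmono.trans_eq heval) hK1
      _ ≤ ε * |t-s| := by
          refine mul_le_mul_of_nonneg_right ?_ habs
          rw [← mul_div_assoc, div_le_iff₀ hK11]
          nlinarith
  refine ⟨Y, hprop1, ?_, ?_⟩
  -- Property 2 : uniqueness up to constant
  · intro Y' hY'
    refine ⟨Y' 0 - Y 0, ?_⟩
    intro t ht
    have ht0 : 0 ≤ t := ht.1
    have htT : t ≤ T := ht.2
    have key : ∀ ε > (0:ℝ), |(Y' t - Y t) - (Y' 0 - Y 0)| ≤ 2 * T * ε := by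
      intro ε hε
      obtain ⟨δ₁, hδ₁, hP'⟩ := hY' ε hε
      obtain ⟨δ₂, hδ₂, hP⟩ := hprop1 ε hε
      set δ := min δ₁ δ₂ with hδdef
      have hδ : 0 < δ := lt_min hδ₁ hδ₂
      obtain ⟨N, hN⟩ := exists_nat_gt (t/δ)
      have hdiv : (0:ℝ) ≤ t/δ := div_nonneg ht0 hδ.le
      have hN0 : (0:ℝ) < N := lt_of_le_of_lt hdiv hN
      set f : ℕ → ℝ := fun k => (k:ℝ) * t / N with hfdef
      have hf0 : f 0 = 0 := by simp [hfdef]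
      have hfN : f N = t := by
        rw [hfdef]; field_simp
      have hgap : ∀ k : ℕ, f (k+1) - f k = t / N := by
        intro k; rw [hfdef]; push_cast; field_simp; ring
      have hgapδ : t / N ≤ δ := by
        rw [div_le_iff₀ hN0]
        have := (div_lt_iff₀ hδ).mp hN
        linarith
      have hgap0 : 0 ≤ t / N := div_nonneg ht0 hN0.le
      have hmem : ∀ k : ℕ, k ≤ N → f k ∈ Set.Icc (0:ℝ) T := by
        intro k hk
        constructor
        · rw [hfdef]; positivity
        · have hkN : (k:ℝ) ≤ N := Nat.cast_le.mpr hk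
          have h1 : (k:ℝ) * t ≤ (N:ℝ) * t := mul_le_mul_of_nonneg_right hkN ht0
          have h2 : f k ≤ t := by
            rw [hfdef, div_le_iff₀ hN0]
            calc (k:ℝ) * t ≤ (N:ℝ) * t := h1
              _ = t * N := by ring
          linarith
      have e : (Y' t - Y t) - (Y' 0 - Y 0)
          = ∑ k ∈ Finset.range N,
              ((Y' (f (k+1)) - Y' (f k)) - (Y (f (k+1)) - Y (f k))) := by
        have h := Finset.sum_range_sub (fun k => Y' (f k) - Y (f k)) N
        rw [hf0, hfN] at h
        rw [← h]
        exact Finset.sum_congr rfl (fun k _ => by ring)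
      rw [e]
      have hterm : ∀ k ∈ Finset.range N,
          |(Y' (f (k+1)) - Y' (f k)) - (Y (f (k+1)) - Y (f k))| ≤ 2 * ε * (t/N) := by
        intro k hk
        have hk' : k + 1 ≤ N := Finset.mem_range.mp hk
        have hkmem := hmem k (by omega)
        have hk1mem := hmem (k+1) hk'
        have habs : |f (k+1) - f k| = t/N := by rw [hgap k, abs_of_nonneg hgap0]
        have hd1 : |f (k+1) - f k| ≤ δ₁ := by
          rw [habs]; exact hgapδ.trans (min_le_left _ _)
        have hd2 : |f (k+1) - f k| ≤ δ₂ := by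
          rw [habs]; exact hgapδ.trans (min_le_right _ _)
        have h1 := hP' (f k) hkmem (f (k+1)) hk1mem hd1
        have h2 := hP (f k) hkmem (f (k+1)) hk1mem hd2
        rw [habs] at h1 h2
        have e2 : (Y' (f (k+1)) - Y' (f k)) - (Y (f (k+1)) - Y (f k))
            = (Y' (f (k+1)) - Y' (f k) - Zt (f k) (f (k+1)))
              - (Y (f (k+1)) - Y (f k) - Zt (f k) (f (k+1))) := by ring
        rw [e2]
        calc |_ - _| ≤ |Y' (f (k+1)) - Y' (f k) - Zt (f k) (f (k+1))|
              + |Y (f (k+1)) - Y (f k) - Zt (f k) (f (k+1))| := abs_sub _ _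
          _ ≤ ε * (t/N) + ε * (t/N) := add_le_add h1 h2
          _ = 2 * ε * (t/N) := by ring
      calc |∑ k ∈ Finset.range N, ((Y' (f (k+1)) - Y' (f k)) - (Y (f (k+1)) - Y (f k)))|
          ≤ ∑ k ∈ Finset.range N, |(Y' (f (k+1)) - Y' (f k)) - (Y (f (k+1)) - Y (f k))| :=
            Finset.abs_sum_le_sum_abs _ _
        _ ≤ ∑ _k ∈ Finset.range N, 2 * ε * (t/N) := Finset.sum_le_sum hterm
        _ = N * (2 * ε * (t/N)) := by rw [Finset.sum_const, Finset.card_range]; simp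
        _ = 2 * ε * t := by field_simp
        _ ≤ 2 * T * ε := by nlinarith
    have hD0 : (Y' t - Y t) - (Y' 0 - Y 0) = 0 := by
      by_contra hne
      have habs : 0 < |(Y' t - Y t) - (Y' 0 - Y 0)| := abs_pos.mpr (sub_ne_zero.mpr ?_)
      · have h2T : (0:ℝ) < 2*T+1 := by linarith
        have hk := key (|(Y' t - Y t) - (Y' 0 - Y 0)|/(2*T+1)) (by positivity)
        have : 2*T*(|(Y' t - Y t) - (Y' 0 - Y 0)|/(2*T+1)) < |(Y' t - Y t) - (Y' 0 - Y 0)| := by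
          rw [← mul_div_assoc, div_lt_iff₀ h2T]
          nlinarith
        linarith
      · intro hcon
        exact hne (by linarith [sub_eq_zero.mpr hcon])
    linarith [hD0]
  -- Property 3 : convergence of Riemann sums
  · intro s hs t ht hst ε hε
    have hTs : t - s ≤ T := by
      have := hs.1; have := ht.2; linarith
    refine ⟨(ε/((K1+1)*T))^((1:ℝ)/(p+q-1)),
      Real.rpow_pos_of_pos (by positivity) _, ?_⟩
    intro n c hc0 hclast hcmono hmesh
    set δ0 : ℝ := (ε/((K1+1)*T))^((1:ℝ)/(p+q-1)) with hδ0def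
    have hδ0 : 0 < δ0 := Real.rpow_pos_of_pos (by positivity) _
    have heval : δ0^(p+q-1) = ε/((K1+1)*T) := by
      rw [hδ0def, ← Real.rpow_mul (by positivity : (0:ℝ) ≤ ε/((K1+1)*T)), one_div,
        inv_mul_cancel₀ (by intro hcon; linarith : p+q-1 ≠ 0), Real.rpow_one]
    have hcm : Monotone c := Fin.monotone_iff_le_succ.mpr hcmono
    have hmemc : ∀ j : Fin (n+1), c j ∈ Set.Icc (0:ℝ) T := by
      intro j
      have h1 : c 0 ≤ c j := hcm (Fin.zero_le j)
      have h2 : c j ≤ c (Fin.last n) := hcm (Fin.le_last j)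
      rw [hc0] at h1; rw [hclast] at h2
      exact ⟨by linarith [hs.1], by linarith [ht.2]⟩
    have tele := Stmt4.fin_telescope n (fun j => Y (c j))
    rw [hc0, hclast] at tele
    have telec := Stmt4.fin_telescope n c
    rw [hc0, hclast] at telec
    have e : (∑ i : Fin n, Zt (c i.castSucc) (c i.succ)) - (Y t - Y s)
        = ∑ i : Fin n, (Zt (c i.castSucc) (c i.succ) - (Y (c i.succ) - Y (c i.castSucc))) := by
      rw [Finset.sum_sub_distrib, tele]
    rw [e]
    have hterm : ∀ i ∈ (Finset.univ : Finset (Fin n)),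
        |Zt (c i.castSucc) (c i.succ) - (Y (c i.succ) - Y (c i.castSucc))|
          ≤ K1 * (ε/((K1+1)*T)) * (c i.succ - c i.castSucc) := by
      intro i _
      have hab : c i.castSucc ≤ c i.succ := hcmono i
      have hd : c i.succ - c i.castSucc ≤ δ0 := hmesh i
      have h := hmaster (c i.castSucc) (hmemc _) (c i.succ) (hmemc _)
      rw [abs_sub_comm] at h
      have habs : |c i.succ - c i.castSucc| = c i.succ - c i.castSucc :=
        abs_of_nonneg (by linarith)
      rw [habs] at h
      have hsplit : (c i.succ - c i.castSucc)^(p+q)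
          = (c i.succ - c i.castSucc)^(p+q-1) * (c i.succ - c i.castSucc) := by
        nth_rewrite 3 [← Real.rpow_one (c i.succ - c i.castSucc)]
        rw [← Real.rpow_add' (by linarith) (by intro hcon; linarith : (p+q-1) + 1 ≠ 0)]
        norm_num
      have hmono2 : (c i.succ - c i.castSucc)^(p+q-1) ≤ δ0^(p+q-1) :=
        Real.rpow_le_rpow (by linarith) hd (by linarith)
      calc |Zt (c i.castSucc) (c i.succ) - (Y (c i.succ) - Y (c i.castSucc))|
          ≤ K1 * (c i.succ - c i.castSucc)^(p+q) := h
        _ = K1 * (c i.succ - c i.castSucc)^(p+q-1) * (c i.succ - c i.castSucc) := by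
            rw [hsplit]; ring
        _ ≤ K1 * (ε/((K1+1)*T)) * (c i.succ - c i.castSucc) := by
            refine mul_le_mul_of_nonneg_right ?_ (by linarith)
            exact mul_le_mul_of_nonneg_left (hmono2.trans_eq heval) hK1
    calc |∑ i : Fin n, (Zt (c i.castSucc) (c i.succ) - (Y (c i.succ) - Y (c i.castSucc)))|
        ≤ ∑ i : Fin n, |Zt (c i.castSucc) (c i.succ) - (Y (c i.succ) - Y (c i.castSucc))| :=
          Finset.abs_sum_le_sum_abs _ _
      _ ≤ ∑ i : Fin n, K1 * (ε/((K1+1)*T)) * (c i.succ - c i.castSucc) :=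
          Finset.sum_le_sum hterm
      _ = K1 * (ε/((K1+1)*T)) * (t - s) := by
          rw [← Finset.mul_sum, telec]
      _ ≤ ε := by
          rw [div_eq_mul_inv]
          have hts0 : 0 ≤ t - s := by linarith
          have hinv : (0:ℝ) < ((K1+1)*T)⁻¹ := by positivity
          have h1 : K1 * (ε * ((K1+1)*T)⁻¹) * (t - s) ≤ K1 * (ε * ((K1+1)*T)⁻¹) * T :=
            mul_le_mul_of_nonneg_left hTs (by positivity)
          refine h1.trans ?_
          rw [show K1 * (ε * ((K1+1)*T)⁻¹) * T = (K1/(K1+1)) * ε * (T/T) by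
            field_simp]
          rw [div_self hT.ne']
          have : K1/(K1+1) ≤ 1 := by
            rw [div_le_one hK11]; linarith
          nlinarith
end
end

section
/- The linear map φ_g: ℋ → T(ℝ^d) determined by φ_g(1) = 1, φ_g([h]_i) = φ_g(h)⊗e_i and φ_g(h₁h₂) = φ_g(h₁)⧢φ_g(h₂) intertwines the coproducts: Δ̄φ_g(h) = (φ_g⊗φ_g)Δh for every h ∈ ℋ, where Δ̄ is the deconcatenation coproduct on T(ℝ^d); consequently φ_g is a morphism of Hopf algebras from (ℋ,·,Δ) to the shuffle Hopf algebra (T(ℝ^d),⧢,Δ̄). -/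
open scoped TensorProduct
open scoped Classical

noncomputable section

/-! ### Auxiliary lemmas for Statement 8 -/

namespace Words

variable {ι : Type}

theorem sort_map_succ (n : ℕ) (S : Finset (Fin n)) :
    (S.map (Fin.succEmb n)).sort (· ≤ ·) = (S.sort (· ≤ ·)).map Fin.succ := by
  refine List.Perm.eq_of_pairwise' (Finset.pairwise_sort _ _)
    (List.Pairwise.map _ (fun a b h => Fin.succ_le_succ_iff.mpr h) (Finset.pairwise_sort _ _)) ?_
  have h1 : ((S.map (Fin.succEmb n)).sort (· ≤ ·) : Multiset (Fin (n+1))) =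
      ((S.sort (· ≤ ·)).map Fin.succ : List (Fin (n+1))) := by
    rw [Finset.sort_eq, Finset.map_val]
    have h2 : ((S.sort (· ≤ ·) : List (Fin n)) : Multiset (Fin n)) = S.val := Finset.sort_eq _ _
    rw [← h2, ← Multiset.map_coe]
    rfl
  exact Multiset.coe_eq_coe.mp h1

theorem zero_not_mem_map (n : ℕ) (S : Finset (Fin n)) :
    (0 : Fin (n+1)) ∉ S.map (Fin.succEmb n) := by
  simp only [Finset.mem_map]
  rintro ⟨i, -, hi⟩
  exact Fin.succ_ne_zero i hi

theorem sort_insert_zero (n : ℕ) (S : Finset (Fin n)) :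
    (insert 0 (S.map (Fin.succEmb n))).sort (· ≤ ·) =
      0 :: (S.sort (· ≤ ·)).map Fin.succ := by
  rw [Finset.sort_insert _ (fun b _ => Fin.zero_le b) (zero_not_mem_map n S), sort_map_succ]

theorem map_get_succ (a : ι) (w : List ι) (l : List (Fin w.length)) :
    (l.map Fin.succ).map (a :: w).get = l.map w.get := by
  rw [List.map_map]; rfl

theorem subIdx_cons_map (a : ι) (w : List ι) (S : Finset (Fin w.length)) :
    subIdx (a :: w) (S.map (Fin.succEmb w.length)) = subIdx w S := by
  show ((S.map (Fin.succEmb w.length)).sort (· ≤ ·)).map (a :: w).get = _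
  rw [sort_map_succ, map_get_succ]
  rfl

theorem subIdx_cons_insert (a : ι) (w : List ι) (S : Finset (Fin w.length)) :
    subIdx (a :: w)
      ((insert 0 (S.map (Fin.succEmb w.length)) : Finset (Fin (w.length + 1)))) =
      a :: subIdx w S := by
  show ((insert 0 (S.map (Fin.succEmb w.length)) :
      Finset (Fin (w.length + 1))).sort (· ≤ ·)).map (a :: w).get = _
  rw [sort_insert_zero, List.map_cons, map_get_succ]
  rfl

theorem compl_map (n : ℕ) (S : Finset (Fin n)) :
    (S.map (Fin.succEmb n))ᶜ = insert 0 (Sᶜ.map (Fin.succEmb n)) := by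
  ext i
  induction i using Fin.cases with
  | zero =>
    simp only [Finset.mem_compl, Finset.mem_insert, true_or, iff_true]
    exact zero_not_mem_map n S
  | succ j =>
    rw [Finset.mem_compl, Finset.mem_insert]
    constructor
    · intro h
      right
      exact Finset.mem_map.mpr ⟨j,
        Finset.mem_compl.mpr fun hj => h (Finset.mem_map.mpr ⟨j, hj, rfl⟩), rfl⟩
    · rintro (h | h) hmem
      · exact Fin.succ_ne_zero j h
      · rcases Finset.mem_map.mp h with ⟨i, hi, hij⟩
        rcases Finset.mem_map.mp hmem with ⟨k, hk, hkj⟩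
        have e : i = k := Fin.succ_injective n ((hij : i.succ = j.succ).trans
          (hkj : k.succ = j.succ).symm)
        exact Finset.mem_compl.mp hi (e ▸ hk)

theorem compl_insert_map (n : ℕ) (S : Finset (Fin n)) :
    (insert 0 (S.map (Fin.succEmb n)))ᶜ = Sᶜ.map (Fin.succEmb n) := by
  have h := compl_map n Sᶜ
  rw [compl_compl] at h
  rw [← h, compl_compl]

theorem sum_split (n : ℕ) (f : Finset (Fin (n+1)) → ℝ) :
    ∑ S : Finset (Fin (n+1)), f S =
      (∑ S : Finset (Fin n), f (insert 0 (S.map (Fin.succEmb n)))) +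
      ∑ S : Finset (Fin n), f (S.map (Fin.succEmb n)) := by
  have hbij : Function.Bijective
      (fun p : Finset (Fin n) × Bool =>
        if p.2 then insert 0 (p.1.map (Fin.succEmb n)) else p.1.map (Fin.succEmb n)) := by
    rw [Fintype.bijective_iff_injective_and_card]
    constructor
    · rintro ⟨S, b⟩ ⟨S', b'⟩ h
      cases b <;> cases b' <;> simp only [if_true, if_false, Bool.false_eq_true,
        Bool.true_eq_false] at h ⊢
      · rw [Finset.map_injective _ h]
      · have h0 : (0 : Fin (n+1)) ∈ S.map (Fin.succEmb n) := by
          rw [h]; exact Finset.mem_insert_self 0 _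
        exact absurd h0 (zero_not_mem_map n S)
      · have h0 : (0 : Fin (n+1)) ∈ S'.map (Fin.succEmb n) := by
          rw [← h]; exact Finset.mem_insert_self 0 _
        exact absurd h0 (zero_not_mem_map n S')
      · have h2 : (insert (0 : Fin (n+1)) (S.map (Fin.succEmb n))).erase 0 =
            (insert 0 (S'.map (Fin.succEmb n))).erase 0 := by rw [h]
        rw [Finset.erase_insert (zero_not_mem_map n S),
          Finset.erase_insert (zero_not_mem_map n S')] at h2
        rw [Finset.map_injective _ h2]
    · simp [Fintype.card_finset, pow_succ]
  rw [← Fintype.sum_bijective _ hbij _ f (fun p => rfl), Fintype.sum_prod_type]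
  simp only [Fintype.sum_bool, if_true, if_false, Bool.false_eq_true]
  rw [Finset.sum_add_distrib]

theorem subIdx_nil (S : Finset (Fin ([] : List ι).length)) : subIdx [] S = [] := by
  have : S = ∅ := Finset.eq_empty_of_forall_notMem (fun x => x.elim0)
  simp [subIdx, this]

theorem shufW_cons (a : ι) (w : List ι) (x y : List ι → ℝ) :
    shufW x y (a :: w) =
      shufW (fun t => x (a :: t)) y w + shufW x (fun t => y (a :: t)) w := by
  show ∑ S : Finset (Fin (w.length + 1)), x (subIdx (a :: w) S) * y (subIdx (a :: w) Sᶜ) = _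
  rw [sum_split w.length (fun S => x (subIdx (a :: w) S) * y (subIdx (a :: w) Sᶜ))]
  congr 1
  · apply Finset.sum_congr rfl
    intro S _
    rw [subIdx_cons_insert, compl_insert_map, subIdx_cons_map]
  · apply Finset.sum_congr rfl
    intro S _
    rw [subIdx_cons_map, compl_map, subIdx_cons_insert]

theorem shufW_append (u v : List ι) (x y : List ι → ℝ) :
    shufW x y (u ++ v) =
      ∑ S : Finset (Fin u.length), ∑ T : Finset (Fin v.length),
        x (subIdx u S ++ subIdx v T) * y (subIdx u Sᶜ ++ subIdx v Tᶜ) := by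
  induction u generalizing x y with
  | nil =>
    rw [List.nil_append]
    rw [show (∑ S : Finset (Fin ([] : List ι).length), ∑ T : Finset (Fin v.length),
        x (subIdx [] S ++ subIdx v T) * y (subIdx [] Sᶜ ++ subIdx v Tᶜ)) =
      ∑ T : Finset (Fin v.length), x (subIdx v T) * y (subIdx v Tᶜ) from ?_]
    · rfl
    · rw [show (Finset.univ : Finset (Finset (Fin ([] : List ι).length))) = {∅} from rfl,
        Finset.sum_singleton]
      apply Finset.sum_congr rfl
      intro T _
      rw [subIdx_nil, subIdx_nil, List.nil_append, List.nil_append]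
  | cons a u ih =>
    rw [List.cons_append, shufW_cons, ih, ih]
    rw [show (∑ S : Finset (Fin (a :: u).length), ∑ T : Finset (Fin v.length),
          x (subIdx (a :: u) S ++ subIdx v T) * y (subIdx (a :: u) Sᶜ ++ subIdx v Tᶜ)) =
        ∑ S : Finset (Fin (u.length + 1)), ∑ T : Finset (Fin v.length),
          x (subIdx (a :: u) S ++ subIdx v T) * y (subIdx (a :: u) Sᶜ ++ subIdx v Tᶜ) from rfl]
    rw [sum_split u.length]
    congr 1
    · apply Finset.sum_congr rfl
      intro S _
      apply Finset.sum_congr rfl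
      intro T _
      rw [subIdx_cons_insert, compl_insert_map, subIdx_cons_map, List.cons_append]
    · apply Finset.sum_congr rfl
      intro S _
      apply Finset.sum_congr rfl
      intro T _
      rw [subIdx_cons_map, compl_map, subIdx_cons_insert, List.cons_append]

end Words

namespace StmtAux

theorem Bplus_mono {A : Type} (TD : TreeData A) (a : A) (m : TD.T →₀ ℕ) :
    TD.Bplus a (TD.mono m) = TD.mono (Finsupp.single (TD.attach m a) 1) := by
  have h : TD.mono m = (MvPolynomial.basisMonomials TD.T ℝ) m := by
    rw [MvPolynomial.coe_basisMonomials]; rfl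
  rw [TreeData.Bplus, h, Module.Basis.constr_basis]

theorem X_eq_mono {A : Type} (TD : TreeData A) (τ : TD.T) :
    (MvPolynomial.X τ : TD.H) = TD.mono (Finsupp.single τ 1) := rfl

theorem size_lt {A : Type} (TD : TreeData A) (m : TD.T →₀ ℕ) (a : A) (σ : TD.T)
    (hσ : σ ∈ m.support) : TD.size σ < TD.size (TD.attach m a) := by
  rw [TD.size_attach]
  have h1 : m σ * TD.size σ ≤ m.sum fun τ k => k * TD.size τ :=
    Finset.single_le_sum (f := fun τ => m τ * TD.size τ)
      (fun i _ => Nat.zero_le _) hσ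
  have h2 : 1 ≤ m σ := Nat.one_le_iff_ne_zero.mpr (Finsupp.mem_support_iff.mp hσ)
  have h3 := Nat.le_trans (Nat.le_mul_of_pos_left _ (Nat.lt_of_lt_of_le Nat.zero_lt_one h2)) h1
  omega

variable {A : Type} {TD : TreeData A}

/-- the coefficient functional `⟨(φ ⊗ φ)(t), u ⊗ v⟩` on `ℋ ⊗ ℋ` -/
def F (phi : TD.H →ₗ[ℝ] (List A → ℝ)) (u v : List A) : TD.H ⊗[ℝ] TD.H →ₗ[ℝ] ℝ :=
  (LinearMap.mul' ℝ ℝ).comp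
    (TensorProduct.map
      ((LinearMap.proj (R := ℝ) (φ := fun _ : List A => ℝ) u).comp phi)
      ((LinearMap.proj (R := ℝ) (φ := fun _ : List A => ℝ) v).comp phi))

theorem F_tmul (phi : TD.H →ₗ[ℝ] (List A → ℝ)) (u v : List A) (p q : TD.H) :
    F phi u v (p ⊗ₜ[ℝ] q) = phi p u * phi q v := by
  simp [F, LinearMap.mul'_apply]

theorem F_mul (phi : TD.H →ₗ[ℝ] (List A → ℝ))
    (hmul : ∀ p q : TD.H, phi (p * q) = Words.shufW (phi p) (phi q))
    (u v : List A) (t s : TD.H ⊗[ℝ] TD.H) :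
    F phi u v (t * s) =
      ∑ S : Finset (Fin u.length), ∑ T : Finset (Fin v.length),
        F phi (Words.subIdx u S) (Words.subIdx v T) t *
          F phi (Words.subIdx u Sᶜ) (Words.subIdx v Tᶜ) s := by
  induction t using TensorProduct.induction_on with
  | zero => simp
  | add t₁ t₂ ih₁ ih₂ =>
    rw [add_mul, map_add, ih₁, ih₂, ← Finset.sum_add_distrib]
    apply Finset.sum_congr rfl
    intro S _
    rw [← Finset.sum_add_distrib]
    apply Finset.sum_congr rfl
    intro T _
    rw [map_add, add_mul]
  | tmul p q =>
    induction s using TensorProduct.induction_on with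
    | zero => simp
    | add s₁ s₂ ih₁ ih₂ =>
      rw [mul_add, map_add, ih₁, ih₂, ← Finset.sum_add_distrib]
      apply Finset.sum_congr rfl
      intro S _
      rw [← Finset.sum_add_distrib]
      apply Finset.sum_congr rfl
      intro T _
      rw [map_add, mul_add]
    | tmul r r' =>
      rw [Algebra.TensorProduct.tmul_mul_tmul, F_tmul, hmul, hmul,
        Words.shufW, Words.shufW, Finset.sum_mul_sum]
      apply Finset.sum_congr rfl
      intro S _
      apply Finset.sum_congr rfl
      intro T _
      rw [F_tmul, F_tmul]
      ring

theorem F_lTensor (phi : TD.H →ₗ[ℝ] (List A → ℝ)) (a : A)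
    (hB : ∀ p : TD.H, phi (TD.Bplus a p) =
      fun w => if w.getLast? = some a then phi p w.dropLast else 0)
    (u v : List A) (t : TD.H ⊗[ℝ] TD.H) :
    F phi u v (LinearMap.lTensor TD.H (TD.Bplus a) t) =
      if v.getLast? = some a then F phi u v.dropLast t else 0 := by
  induction t using TensorProduct.induction_on with
  | zero =>
    rw [LinearMap.map_zero, LinearMap.map_zero]
    split <;> rfl
  | add t₁ t₂ ih₁ ih₂ =>
    rw [map_add, map_add, ih₁, ih₂]
    split_ifs
    · rw [map_add]
    · rw [add_zero]
  | tmul p q =>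
    rw [LinearMap.lTensor_tmul, F_tmul, hB]
    show phi p u * (if v.getLast? = some a then phi q v.dropLast else 0) =
      if v.getLast? = some a then F phi u v.dropLast (p ⊗ₜ[ℝ] q) else 0
    rw [F_tmul, mul_ite, mul_zero]

end StmtAux

/-! ### STATEMENT 8
The linear map `φ_g : ℋ → T(ℝᵈ)` determined by `φ_g(1) = 1`,
`φ_g([h]_i) = φ_g(h) ⊗ e_i` and `φ_g(h₁h₂) = φ_g(h₁) ⧢ φ_g(h₂)` intertwines the
coproducts, `Δ̄ φ_g(h) = (φ_g ⊗ φ_g) Δh` (stated in coefficients: for all words `u, v`,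
`⟨φ_g(h), u ⊗ v⟩-deconcatenation = ⟨(φ_g ⊗ φ_g)Δh, u ⊗ v⟩`); consequently `φ_g` is a
morphism of Hopf algebras from `(ℋ,·,Δ)` to the shuffle Hopf algebra `(T(ℝᵈ),⧢,Δ̄)`. -/
theorem stmt_8 {d : ℕ} (hd : 1 ≤ d) (TD : TreeData (Fin d)) (CK : CKCoproduct TD)
    (phi : TD.H →ₗ[ℝ] (List (Fin d) → ℝ)) (hphi : TD.IsPhiG phi) :
    ∀ (h : TD.H) (u v : List (Fin d)),
      phi h (u ++ v) =
        LinearMap.mul' ℝ ℝ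
          (TensorProduct.map
            ((LinearMap.proj (R := ℝ) (φ := fun _ : List (Fin d) => ℝ) u).comp phi)
            ((LinearMap.proj (R := ℝ) (φ := fun _ : List (Fin d) => ℝ) v).comp phi)
            (CK.Δ h)) := by
  obtain ⟨hone, -, hB, hmul⟩ := hphi
  suffices H : ∀ h : TD.H, ∀ u v : List (Fin d),
      phi h (u ++ v) = StmtAux.F phi u v (CK.Δ h) by
    intro h u v
    exact H h u v
  have P1 : ∀ u v : List (Fin d), phi 1 (u ++ v) = StmtAux.F phi u v (CK.Δ 1) := by
    intro u v
    rw [hone, map_one (CK.Δ), Algebra.TensorProduct.one_def, StmtAux.F_tmul, hone]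
    by_cases hu : u = [] <;> by_cases hv : v = [] <;>
      simp [Words.unitW, List.append_eq_nil_iff, hu, hv]
  have Pmul : ∀ p q : TD.H,
      (∀ u v, phi p (u ++ v) = StmtAux.F phi u v (CK.Δ p)) →
      (∀ u v, phi q (u ++ v) = StmtAux.F phi u v (CK.Δ q)) →
      ∀ u v, phi (p * q) (u ++ v) = StmtAux.F phi u v (CK.Δ (p * q)) := by
    intro p q hp hq u v
    rw [hmul, Words.shufW_append, map_mul, StmtAux.F_mul phi hmul]
    apply Finset.sum_congr rfl
    intro S _
    apply Finset.sum_congr rfl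
    intro T _
    rw [hp, hq]
  have PB : ∀ (a : Fin d) (p : TD.H),
      (∀ u v, phi p (u ++ v) = StmtAux.F phi u v (CK.Δ p)) →
      ∀ u v, phi (TD.Bplus a p) (u ++ v) = StmtAux.F phi u v (CK.Δ (TD.Bplus a p)) := by
    intro a p hp u v
    rw [CK.Δ_Bplus, map_add, StmtAux.F_tmul, StmtAux.F_lTensor phi a (hB a), hB, hone]
    beta_reduce
    cases v with
    | nil =>
      simp [Words.unitW]
    | cons b v' =>
      have hv : (b :: v') ≠ [] := List.cons_ne_nil b v'
      rw [List.getLast?_append_of_ne_nil u hv]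
      have hzero : Words.unitW (b :: v') = 0 := by simp [Words.unitW]
      rw [hzero, mul_zero, zero_add]
      have hd' : (u ++ b :: v').dropLast = u ++ (b :: v').dropLast :=
        List.dropLast_append_of_ne_nil hv
      split_ifs with hlast
      · rw [hd', hp]
      · rfl
  have PX : ∀ (N : ℕ) (τ : TD.T), TD.size τ ≤ N →
      ∀ u v, phi (MvPolynomial.X τ) (u ++ v) =
        StmtAux.F phi u v (CK.Δ (MvPolynomial.X τ)) := by
    intro N
    induction N with
    | zero =>
      intro τ hτ
      exact absurd hτ (by have := TD.size_pos τ; omega)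
    | succ N ihN =>
      intro τ hτ
      obtain ⟨⟨m, a⟩, hma⟩ := TD.attach_bijective.surjective τ
      simp only at hma
      have hsup : ∀ σ ∈ m.support, TD.size σ ≤ N := by
        intro σ hσ
        have h1 := StmtAux.size_lt TD m a σ hσ
        rw [hma] at h1
        omega
      have hpow : ∀ σ ∈ m.support, ∀ k : ℕ, ∀ u v,
          phi (MvPolynomial.X σ ^ k) (u ++ v) =
            StmtAux.F phi u v (CK.Δ (MvPolynomial.X σ ^ k)) := by
        intro σ hσ k
        induction k with
        | zero => simpa [pow_zero] using P1
        | succ k ihk =>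
          intro u v
          rw [pow_succ]
          exact Pmul _ _ ihk (ihN σ (hsup σ hσ)) u v
      have hmono : ∀ u v, phi (TD.mono m) (u ++ v) =
          StmtAux.F phi u v (CK.Δ (TD.mono m)) := by
        have hm : TD.mono m = m.prod fun n e => MvPolynomial.X n ^ e := by
          rw [TreeData.mono, MvPolynomial.monomial_eq, map_one, one_mul]
        rw [hm, Finsupp.prod]
        refine Finset.prod_induction _
          (fun p => ∀ u v, phi p (u ++ v) = StmtAux.F phi u v (CK.Δ p))
          (fun p q hp hq => Pmul p q hp hq) P1 ?_
        intro σ hσ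
        exact hpow σ hσ (m σ)
      intro u v
      rw [StmtAux.X_eq_mono, ← hma, ← StmtAux.Bplus_mono TD a m]
      exact PB a (TD.mono m) hmono u v
  intro h
  induction h using MvPolynomial.induction_on with
  | C r =>
    intro u v
    rw [show (MvPolynomial.C r : TD.H) = algebraMap ℝ TD.H r from rfl, AlgHom.commutes,
      Algebra.algebraMap_eq_smul_one, map_smul, Algebra.algebraMap_eq_smul_one, map_smul]
    simp only [Pi.smul_apply, smul_eq_mul]
    rw [P1 u v, map_one]
  | add p q hp hq =>
    intro u v
    rw [map_add, map_add, map_add, Pi.add_apply, hp u v, hq u v]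
  | mul_X p τ hp =>
    exact Pmul p (MvPolynomial.X τ) hp (PX (TD.size τ) τ le_rfl)
end
end
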